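/- arXiv:1910.01499 — 4 statements merged into one kernel-verified Lean document; each statement's English description precedes it below -/
import Mathlib

section
/- Let φ : (G,g) → T be a hyperelliptic morphism. Then: (i) for every x ∈ X(T), either φ^{-1}(x) consists of exactly two elements, each with d_φ = 1, or φ^{-1}(x) consists of exactly one element with d_φ = 2; (ii) the set C′_φ = { x′ ∈ X(G) : d_φ(x′) = 2 } is a subgraph of G (in particular, if a half-edge of G has degree 2 then so does its root vertex), φ restricts to a bijection C′_φ → C_φ := φ(C′_φ), and C_φ is a subgraph of T. -/
namespace TropDR

open Finset

/-- `Finset.filter` with classical decidability. -/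
noncomputable def cfilter {α : Type*} (p : α → Prop) (s : Finset α) : Finset α :=
  @Finset.filter α p (Classical.decPred p) s

/-- A graph with legs: a finite set `X` together with an idempotent root map `rt`
and an involution `inv` fixing every root vertex. -/
structure PGraph where
  X : Type
  [fintypeX : Fintype X]
  [decEqX : DecidableEq X]
  rt : X → X
  inv : X → X
  rt_idem : ∀ x, rt (rt x) = rt x
  inv_invol : ∀ x, inv (inv x) = x
  inv_fix_rt : ∀ x, inv (rt x) = rt x

attribute [instance] PGraph.fintypeX PGraph.decEqX

namespace PGraph

variable (G : PGraph)

/-- Vertices are the fixed points (= the image) of the root map. -/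
def IsVertex (x : G.X) : Prop := G.rt x = x

/-- Half-edges are the non-vertices. -/
def IsHalf (x : G.X) : Prop := G.rt x ≠ x

/-- Legs are the `inv`-fixed half-edges. -/
def IsLeg (x : G.X) : Prop := G.IsHalf x ∧ G.inv x = x

/-- Halves of genuine edges: half-edges moved by the involution. -/
def IsEdgeHalf (x : G.X) : Prop := G.IsHalf x ∧ G.inv x ≠ x

noncomputable def vertexSet : Finset G.X := cfilter (fun x => G.IsVertex x) Finset.univ

noncomputable def legSet : Finset G.X := cfilter (fun x => G.IsLeg x) Finset.univ

noncomputable def edgeHalfSet : Finset G.X := cfilter (fun x => G.IsEdgeHalf x) Finset.univ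

/-- Tangent directions at a vertex `v`: half-edges rooted at `v`. -/
noncomputable def tangents (v : G.X) : Finset G.X :=
  cfilter (fun h => G.IsHalf h ∧ G.rt h = v) Finset.univ

noncomputable def valence (v : G.X) : ℕ := (G.tangents v).card

/-- The number of edges: half the number of edge half-edges. -/
noncomputable def numEdges : ℕ := G.edgeHalfSet.card / 2

noncomputable def numLegs : ℕ := G.legSet.card

noncomputable def numVertices : ℕ := G.vertexSet.card

/-- Connectedness: the equivalence relation generated by `x ∼ rt x` and `x ∼ inv x`
has a single class (and `X` is nonempty). -/
def Connected : Prop :=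
  Nonempty G.X ∧ ∀ x y : G.X, Relation.EqvGen (fun a b => G.rt a = b ∨ G.inv a = b) x y

/-- A subgraph: a subset of `X` closed under the root map and the involution. -/
def IsSubgraph (F : Finset G.X) : Prop :=
  (∀ x ∈ F, G.rt x ∈ F) ∧ (∀ x ∈ F, G.inv x ∈ F)

/-- Valency of `v` inside a subgraph `F`. -/
noncomputable def valIn (F : Finset G.X) (v : G.X) : ℕ := (G.tangents v ∩ F).card

end PGraph

/-- A morphism of graphs: commutes with the root maps and involutions,
and maps no edge into a leg. -/
structure GraphHom (G' G : PGraph) where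
  toFun : G'.X → G.X
  map_rt : ∀ x, toFun (G'.rt x) = G.rt (toFun x)
  map_inv : ∀ x, toFun (G'.inv x) = G.inv (toFun x)
  edge_not_leg : ∀ h, G'.IsEdgeHalf h → ¬ G.IsLeg (toFun h)

/-- A harmonic morphism of graphs: a graph morphism together with a degree function. -/
structure HarmonicHom (G' G : PGraph) extends GraphHom G' G where
  deg : G'.X → ℕ
  deg_edge : ∀ h, G'.IsEdgeHalf h → deg (G'.inv h) = deg h
  deg_zero_iff : ∀ h, G'.IsHalf h → (deg h = 0 ↔ G.IsVertex (toFun h))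
  harmonic : ∀ v', G'.IsVertex v' → ∀ h, G.IsHalf h → G.rt h = toFun v' →
    deg v' = ∑ h' ∈ cfilter (fun h' => toFun h' = h) (G'.tangents v'), deg h'

namespace HarmonicHom

variable {G' G : PGraph} (φ : HarmonicHom G' G)

/-- A harmonic morphism is finite if it has positive degree on every half-edge. -/
def Finite : Prop := ∀ h, G'.IsHalf h → 0 < φ.deg h

/-- The sum of the degrees over the vertex fiber of `v`. -/
noncomputable def vertexFiberDeg (v : G.X) : ℕ :=
  ∑ v' ∈ cfilter (fun v' => φ.toFun v' = v) G'.vertexSet, φ.deg v'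

end HarmonicHom

/-- A weighted graph: a graph together with a genus function on (all elements;
only the values at vertices are relevant). -/
structure WGraph extends PGraph where
  gw : X → ℕ

namespace WGraph

variable (G : WGraph)

/-- The genus of a (connected) weighted graph. -/
noncomputable def genus : ℤ :=
  (G.toPGraph.numEdges : ℤ) - (G.toPGraph.numVertices : ℤ) + 1 +
    ∑ v ∈ G.toPGraph.vertexSet, (G.gw v : ℤ)

/-- The Euler characteristic of a vertex. -/
noncomputable def chiV (v : G.X) : ℤ :=
  2 - 2 * (G.gw v : ℤ) - (G.toPGraph.valence v : ℤ)

/-- The Euler characteristic of a (connected) weighted graph. -/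
noncomputable def chi : ℤ := 2 - 2 * G.genus - (G.toPGraph.numLegs : ℤ)

end WGraph

/-- The ramification degree of a (finite) harmonic morphism of weighted graphs at `v'`. -/
noncomputable def ram {G' G : WGraph} (φ : HarmonicHom G'.toPGraph G.toPGraph) (v' : G'.X) : ℤ :=
  (φ.deg v' : ℤ) * G.chiV (φ.toFun v') - G'.chiV v'

def Unramified {G' G : WGraph} (φ : HarmonicHom G'.toPGraph G.toPGraph) : Prop :=
  ∀ v', G'.toPGraph.IsVertex v' → ram φ v' = 0

def Effective {G' G : WGraph} (φ : HarmonicHom G'.toPGraph G.toPGraph) : Prop :=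
  ∀ v', G'.toPGraph.IsVertex v' → 0 ≤ ram φ v'

/-- A tree: a connected weighted graph of genus zero. -/
def IsTree (T : WGraph) : Prop := T.toPGraph.Connected ∧ T.genus = 0

/-- A hyperelliptic morphism: a finite harmonic morphism of degree two onto a tree, such
that `d_φ(v) = 2` at every vertex of positive weight. -/
def IsHyperelliptic {G T : WGraph} (φ : HarmonicHom G.toPGraph T.toPGraph) : Prop :=
  φ.Finite ∧ IsTree T ∧ (∀ v, T.toPGraph.IsVertex v → φ.vertexFiberDeg v = 2) ∧
    (∀ v, G.toPGraph.IsVertex v → 0 < G.gw v → φ.deg v = 2)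

section Aux

lemma mem_cfilter {α : Type*} {p : α → Prop} {s : Finset α} {x : α} :
    x ∈ cfilter p s ↔ x ∈ s ∧ p x := by
  unfold cfilter
  exact @Finset.mem_filter _ _ (Classical.decPred p) _ _

lemma isolated_all_eq (P : PGraph) (hP : P.Connected) (v : P.X) (hv : P.IsVertex v)
    (hiso : ∀ h, ¬(P.IsHalf h ∧ P.rt h = v)) (z : P.X) : z = v := by
  have key : ∀ a b : P.X,
      Relation.EqvGen (fun a b => P.rt a = b ∨ P.inv a = b) a b → (a = v ↔ b = v) := by
    intro a b hab
    induction hab with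
    | rel a b h =>
        constructor
        · intro ha; subst ha
          rcases h with h | h
          · rw [← h]; exact hv
          · rw [← h]
            have h1 := P.inv_fix_rt a
            rw [hv] at h1
            exact h1
        · intro hb; subst hb
          rcases h with h | h
          · by_contra hne
            exact hiso a ⟨fun hr => hne (by rw [← h, hr]), h⟩
          · have h2 := congrArg P.inv h
            rw [P.inv_invol] at h2
            rw [h2]
            have h1 := P.inv_fix_rt b
            rw [hv] at h1
            exact h1
    | refl a => exact Iff.rfl
    | symm a b _ ih => exact ih.symm
    | trans a b c _ _ ih1 ih2 => exact ih1.trans ih2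
  exact (key z v (hP.2 z v)).mpr rfl

variable {G T : WGraph} (φ : HarmonicHom G.toPGraph T.toPGraph)

lemma vertex_image (v : G.X) (hv : G.toPGraph.IsVertex v) :
    T.toPGraph.IsVertex (φ.toFun v) := by
  unfold PGraph.IsVertex at *
  rw [← φ.map_rt, hv]

lemma half_image (hfin : φ.Finite) (h : G.X) (hh : G.toPGraph.IsHalf h) :
    T.toPGraph.IsHalf (φ.toFun h) := by
  intro hcon
  have h0 := (φ.deg_zero_iff h hh).mpr hcon
  have hp := hfin h hh
  omega

lemma fiber_of_half_is_half (hfin : φ.Finite) (z : G.X) (x : T.X)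
    (hx : T.toPGraph.IsHalf x) (hz : φ.toFun z = x) : G.toPGraph.IsHalf z := by
  by_contra hcon
  have hv : G.toPGraph.IsVertex z := not_not.mp hcon
  have hv2 := vertex_image φ z hv
  rw [hz] at hv2
  exact hx hv2

lemma deg_pos (hG : G.toPGraph.Connected) (hφ : IsHyperelliptic φ) (y : G.X) :
    0 < φ.deg y := by
  by_cases hy : G.toPGraph.IsVertex y
  · by_cases hiso : ∃ h, G.toPGraph.IsHalf h ∧ G.toPGraph.rt h = y
    · obtain ⟨h, hh, hrh⟩ := hiso
      have hpos := hφ.1 h hh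
      have hhx : T.toPGraph.IsHalf (φ.toFun h) := half_image φ hφ.1 h hh
      have hrt : T.toPGraph.rt (φ.toFun h) = φ.toFun y := by
        rw [← φ.map_rt, hrh]
      have hd := φ.harmonic y hy (φ.toFun h) hhx hrt
      have hmem : h ∈ cfilter (fun h' => φ.toFun h' = φ.toFun h)
          (G.toPGraph.tangents y) := by
        rw [mem_cfilter]
        refine ⟨?_, rfl⟩
        unfold PGraph.tangents
        rw [mem_cfilter]
        exact ⟨Finset.mem_univ _, hh, hrh⟩
      calc 0 < φ.deg h := hpos
        _ ≤ _ := Finset.single_le_sum (fun i _ => Nat.zero_le _) hmem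
        _ = φ.deg y := hd.symm
    · push_neg at hiso
      have hall := isolated_all_eq G.toPGraph hG y hy (fun h hc => hiso h hc.1 hc.2)
      have hvy : T.toPGraph.IsVertex (φ.toFun y) := vertex_image φ y hy
      have h2 := hφ.2.2.1 (φ.toFun y) hvy
      unfold HarmonicHom.vertexFiberDeg at h2
      have hset : cfilter (fun v' => φ.toFun v' = φ.toFun y) G.toPGraph.vertexSet
          = {y} := by
        ext z
        rw [mem_cfilter, Finset.mem_singleton]
        constructor
        · intro _; exact hall z
        · rintro rfl
          refine ⟨?_, rfl⟩
          unfold PGraph.vertexSet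
          rw [mem_cfilter]
          exact ⟨Finset.mem_univ _, hy⟩
      rw [hset, Finset.sum_singleton] at h2
      omega
  · exact hφ.1 y hy

lemma fiber_sum (hφ : IsHyperelliptic φ) (x : T.X) :
    ∑ y ∈ cfilter (fun y => φ.toFun y = x) Finset.univ, φ.deg y = 2 := by
  by_cases hx : T.toPGraph.IsVertex x
  · have hset : cfilter (fun y => φ.toFun y = x) Finset.univ
        = cfilter (fun v' => φ.toFun v' = x) G.toPGraph.vertexSet := by
      ext z
      rw [mem_cfilter, mem_cfilter]
      constructor
      · intro hz
        refine ⟨?_, hz.2⟩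
        unfold PGraph.vertexSet
        rw [mem_cfilter]
        refine ⟨Finset.mem_univ _, ?_⟩
        by_contra hzv
        have := half_image φ hφ.1 z hzv
        rw [hz.2] at this
        exact this hx
      · exact fun hz => ⟨Finset.mem_univ _, hz.2⟩
    rw [hset]
    exact hφ.2.2.1 x hx
  · have hxh : T.toPGraph.IsHalf x := hx
    have hvv : T.toPGraph.IsVertex (T.toPGraph.rt x) := T.toPGraph.rt_idem x
    have hmaps : ∀ y ∈ cfilter (fun y => φ.toFun y = x) Finset.univ,
        G.toPGraph.rt y ∈ cfilter (fun v' => φ.toFun v' = T.toPGraph.rt x)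
          G.toPGraph.vertexSet := by
      intro y hy
      rw [mem_cfilter] at hy ⊢
      constructor
      · unfold PGraph.vertexSet
        rw [mem_cfilter]
        exact ⟨Finset.mem_univ _, G.toPGraph.rt_idem y⟩
      · rw [φ.map_rt, hy.2]
    have hfib := Finset.sum_fiberwise_of_maps_to hmaps φ.deg
    rw [← hfib]
    have hinner : ∀ v' ∈ cfilter (fun v' => φ.toFun v' = T.toPGraph.rt x)
          G.toPGraph.vertexSet,
        ∑ y ∈ (cfilter (fun y => φ.toFun y = x) Finset.univ).filter
            (fun y => G.toPGraph.rt y = v'), φ.deg y = φ.deg v' := by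
      intro v' hv'
      rw [mem_cfilter] at hv'
      have hv'v : G.toPGraph.IsVertex v' := by
        have := hv'.1
        unfold PGraph.vertexSet at this
        rw [mem_cfilter] at this
        exact this.2
      have heq : (cfilter (fun y => φ.toFun y = x) Finset.univ).filter
            (fun y => G.toPGraph.rt y = v')
          = cfilter (fun h' => φ.toFun h' = x) (G.toPGraph.tangents v') := by
        ext z
        rw [Finset.mem_filter, mem_cfilter, mem_cfilter]
        unfold PGraph.tangents
        rw [mem_cfilter]
        constructor
        · intro hz
          exact ⟨⟨Finset.mem_univ _,
            fiber_of_half_is_half φ hφ.1 z x hxh hz.1.2, hz.2⟩, hz.1.2⟩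
        · intro hz
          exact ⟨⟨Finset.mem_univ _, hz.2⟩, hz.1.2.2⟩
      rw [heq]
      exact (φ.harmonic v' hv'v x hxh hv'.2.symm).symm
    rw [Finset.sum_congr rfl hinner]
    exact hφ.2.2.1 (T.toPGraph.rt x) hvv

lemma two_sum_cases {α : Type*} [DecidableEq α] (s : Finset α) (f : α → ℕ) (hsum : ∑ y ∈ s, f y = 2)
    (hpos : ∀ y ∈ s, 0 < f y) :
    (s.card = 2 ∧ ∀ y ∈ s, f y = 1) ∨ (s.card = 1 ∧ ∀ y ∈ s, f y = 2) := by
  have hcard : s.card ≤ 2 := by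
    calc s.card = ∑ _y ∈ s, 1 := Finset.card_eq_sum_ones s
      _ ≤ ∑ y ∈ s, f y := Finset.sum_le_sum (fun i hi => hpos i hi)
      _ = 2 := hsum
  have hne : s.card ≠ 0 := by
    intro h
    rw [Finset.card_eq_zero] at h
    subst h
    simp at hsum
  have h12 : s.card = 1 ∨ s.card = 2 := by omega
  rcases h12 with h1 | h2
  · obtain ⟨a, rfl⟩ := Finset.card_eq_one.mp h1
    rw [Finset.sum_singleton] at hsum
    right
    refine ⟨h1, ?_⟩
    intro y hy
    rw [Finset.mem_singleton] at hy
    subst hy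
    exact hsum
  · obtain ⟨a, b, hab, rfl⟩ := Finset.card_eq_two.mp h2
    rw [Finset.sum_pair hab] at hsum
    have ha := hpos a (by simp)
    have hb := hpos b (by simp)
    left
    refine ⟨h2, ?_⟩
    intro y hy
    simp only [Finset.mem_insert, Finset.mem_singleton] at hy
    rcases hy with rfl | rfl <;> omega

end Aux

section Aux2

variable {G T : WGraph} (φ : HarmonicHom G.toPGraph T.toPGraph)

lemma Cprime_subgraph (hφ : IsHyperelliptic φ) :
    G.toPGraph.IsSubgraph (cfilter (fun y => φ.deg y = 2) Finset.univ) := by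
  constructor
  · intro y hy
    rw [mem_cfilter] at hy ⊢
    refine ⟨Finset.mem_univ _, ?_⟩
    by_cases hyv : G.toPGraph.IsVertex y
    · rw [hyv]; exact hy.2
    · have hyh : G.toPGraph.IsHalf y := hyv
      have hv' : G.toPGraph.IsVertex (G.toPGraph.rt y) := G.toPGraph.rt_idem y
      have hφy : T.toPGraph.IsHalf (φ.toFun y) := half_image φ hφ.1 y hyh
      have hrt : T.toPGraph.rt (φ.toFun y) = φ.toFun (G.toPGraph.rt y) := by
        rw [← φ.map_rt]
      have hd := φ.harmonic (G.toPGraph.rt y) hv' (φ.toFun y) hφy hrt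
      have hmem : y ∈ cfilter (fun h' => φ.toFun h' = φ.toFun y)
          (G.toPGraph.tangents (G.toPGraph.rt y)) := by
        rw [mem_cfilter]
        refine ⟨?_, rfl⟩
        unfold PGraph.tangents
        rw [mem_cfilter]
        exact ⟨Finset.mem_univ _, hyh, rfl⟩
      have hge : 2 ≤ φ.deg (G.toPGraph.rt y) := by
        calc 2 = φ.deg y := hy.2.symm
          _ ≤ _ := Finset.single_le_sum (fun i _ => Nat.zero_le _) hmem
          _ = φ.deg (G.toPGraph.rt y) := hd.symm
      have hle : φ.deg (G.toPGraph.rt y) ≤ 2 := by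
        have hs := fiber_sum φ hφ (φ.toFun (G.toPGraph.rt y))
        have hm : G.toPGraph.rt y ∈ cfilter
            (fun z => φ.toFun z = φ.toFun (G.toPGraph.rt y)) Finset.univ := by
          rw [mem_cfilter]; exact ⟨Finset.mem_univ _, rfl⟩
        calc φ.deg (G.toPGraph.rt y)
            ≤ _ := Finset.single_le_sum (fun i _ => Nat.zero_le _) hm
          _ = 2 := hs
      omega
  · intro y hy
    rw [mem_cfilter] at hy ⊢
    refine ⟨Finset.mem_univ _, ?_⟩
    by_cases hfix : G.toPGraph.inv y = y
    · rw [hfix]; exact hy.2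
    · have hyh : G.toPGraph.IsHalf y := by
        intro hcon
        have h1 := G.toPGraph.inv_fix_rt y
        rw [hcon] at h1
        exact hfix h1
      rw [φ.deg_edge y ⟨hyh, hfix⟩]
      exact hy.2

end Aux2

/-- Let `φ : (G,g) → T` be a hyperelliptic morphism (with `G` connected).
Then: (i) for every `x ∈ X(T)`, either `φ⁻¹(x)` has exactly two elements, each with
`d_φ = 1`, or exactly one element with `d_φ = 2`; (ii) the set
`C'_φ = { x' ∈ X(G) : d_φ(x') = 2 }` is a subgraph of `G` (in particular closed under the
root map), `φ` restricts to a bijection from `C'_φ` onto its image `C_φ = φ(C'_φ)`, and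
`C_φ` is a subgraph of `T`. -/
theorem hyperelliptic_dilation_subgraph
    (G T : WGraph) (hG : G.toPGraph.Connected)
    (φ : HarmonicHom G.toPGraph T.toPGraph) (hφ : IsHyperelliptic φ) :
    (∀ x : T.X,
      ((cfilter (fun y => φ.toFun y = x) Finset.univ).card = 2 ∧
        ∀ y ∈ cfilter (fun y => φ.toFun y = x) Finset.univ, φ.deg y = 1) ∨
      ((cfilter (fun y => φ.toFun y = x) Finset.univ).card = 1 ∧
        ∀ y ∈ cfilter (fun y => φ.toFun y = x) Finset.univ, φ.deg y = 2)) ∧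
    G.toPGraph.IsSubgraph (cfilter (fun y => φ.deg y = 2) Finset.univ) ∧
    Set.InjOn φ.toFun ↑(cfilter (fun y => φ.deg y = 2) Finset.univ) ∧
    T.toPGraph.IsSubgraph
      ((cfilter (fun y => φ.deg y = 2) Finset.univ).image φ.toFun) := by
  refine ⟨?_, Cprime_subgraph φ hφ, ?_, ?_⟩
  · intro x
    exact two_sum_cases _ _ (fiber_sum φ hφ x)
      (fun y _ => deg_pos φ hG hφ y)
  · intro y hy y' hy' hxy
    by_contra hne
    rw [Finset.mem_coe, mem_cfilter] at hy hy'
    have hsub : ({y, y'} : Finset G.X) ⊆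
        cfilter (fun z => φ.toFun z = φ.toFun y) Finset.univ := by
      intro z hz
      rw [mem_cfilter]
      simp only [Finset.mem_insert, Finset.mem_singleton] at hz
      rcases hz with rfl | rfl
      · exact ⟨Finset.mem_univ _, rfl⟩
      · exact ⟨Finset.mem_univ _, hxy.symm⟩
    have h4 : ∑ z ∈ ({y, y'} : Finset G.X), φ.deg z = 4 := by
      rw [Finset.sum_pair hne, hy.2, hy'.2]
    have hle := Finset.sum_le_sum_of_subset (f := φ.deg) hsub
    rw [h4, fiber_sum φ hφ (φ.toFun y)] at hle
    omega
  · constructor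
    · intro x hx
      rw [Finset.mem_image] at hx ⊢
      obtain ⟨y, hy, rfl⟩ := hx
      exact ⟨G.toPGraph.rt y, (Cprime_subgraph φ hφ).1 y hy, φ.map_rt y⟩
    · intro x hx
      rw [Finset.mem_image] at hx ⊢
      obtain ⟨y, hy, rfl⟩ := hx
      exact ⟨G.toPGraph.inv y, (Cprime_subgraph φ hφ).2 y hy, φ.map_inv y⟩


end TropDR
end

section
/- Let T be a tree and let D ⊆ L(T) be a set of legs of T with #D even. Then there exists exactly one cycle C in T whose set of legs is D (that is, L(T) ∩ C = D). -/
namespace TropDR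

open Finset

/-- A cycle in a weighted graph `T`: a subgraph `C` such that every vertex `v` of `C` has
even valency in `C` and satisfies `χ_C(v) = 2 − 2g(v) − val_C(v) ≤ 0`. -/
def IsCycle (T : WGraph) (C : Finset T.X) : Prop :=
  T.toPGraph.IsSubgraph C ∧
    ∀ v ∈ C, T.toPGraph.IsVertex v →
      Even (T.toPGraph.valIn C v) ∧
        (2 : ℤ) - 2 * (T.gw v : ℤ) - (T.toPGraph.valIn C v : ℤ) ≤ 0


lemma mem_vertexSet {G : PGraph} {x : G.X} : x ∈ G.vertexSet ↔ G.IsVertex x :=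
  mem_cfilter.trans ⟨fun h => h.2, fun h => ⟨Finset.mem_univ x, h⟩⟩

lemma mem_legSet {G : PGraph} {x : G.X} : x ∈ G.legSet ↔ G.IsLeg x :=
  mem_cfilter.trans ⟨fun h => h.2, fun h => ⟨Finset.mem_univ x, h⟩⟩

lemma mem_edgeHalfSet {G : PGraph} {x : G.X} : x ∈ G.edgeHalfSet ↔ G.IsEdgeHalf x :=
  mem_cfilter.trans ⟨fun h => h.2, fun h => ⟨Finset.mem_univ x, h⟩⟩

lemma mem_tangents {G : PGraph} {u x : G.X} :
    x ∈ G.tangents u ↔ G.IsHalf x ∧ G.rt x = u :=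
  mem_cfilter.trans ⟨fun h => h.2, fun h => ⟨Finset.mem_univ x, h⟩⟩

lemma exists_reps {α : Type*} [DecidableEq α] (inv : α → α) (hinv : ∀ x, inv (inv x) = x)
    (F : Finset α) :
    (∀ x ∈ F, inv x ∈ F) → (∀ x ∈ F, inv x ≠ x) →
    ∃ R : Finset α, R ⊆ F ∧ ∀ x ∈ F, (x ∈ R ↔ inv x ∉ R) := by
  induction F using Finset.strongInduction with
  | _ F ih =>
    intro hcl hnf
    rcases F.eq_empty_or_nonempty with rfl | ⟨a, ha⟩
    · exact ⟨∅, by simp, by simp⟩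
    · have hne : inv a ≠ a := hnf a ha
      set F' := F \ {a, inv a} with hF'
      have hss : F' ⊂ F := by
        apply Finset.sdiff_ssubset (by simp [Finset.insert_subset_iff, ha, hcl a ha]) (by simp)
      have hcl' : ∀ x ∈ F', inv x ∈ F' := by
        intro x hx
        rw [hF', Finset.mem_sdiff] at hx ⊢
        refine ⟨hcl x hx.1, ?_⟩
        simp only [Finset.mem_insert, Finset.mem_singleton] at hx ⊢
        push_neg at hx ⊢
        constructor
        · intro h; exact hx.2.2 (by rw [← h, hinv])
        · intro h; exact hx.2.1 (by rw [← hinv x, h, hinv])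
      have hnf' : ∀ x ∈ F', inv x ≠ x := fun x hx => hnf x (Finset.mem_sdiff.mp hx).1
      obtain ⟨R, hRs, hR⟩ := ih F' hss hcl' hnf'
      have haR : a ∉ R := fun h => by
        have := hRs h; rw [hF', Finset.mem_sdiff] at this; simp at this
      have hiaR : inv a ∉ R := fun h => by
        have := hRs h; rw [hF', Finset.mem_sdiff] at this; simp at this
      refine ⟨insert a R, ?_, ?_⟩
      · exact Finset.insert_subset ha (hRs.trans (Finset.sdiff_subset))
      · intro x hx
        rcases eq_or_ne x a with rfl | hxa
        · simp only [Finset.mem_insert, true_or, true_iff]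
          intro h
          rcases h with h | h
          · exact hne h
          · exact hiaR h
        · rcases eq_or_ne x (inv a) with rfl | hxia
          · have hiia : inv (inv a) = a := hinv a
            simp only [Finset.mem_insert, hiia]
            constructor
            · rintro (h | h)
              · exact absurd h hxa
              · exact absurd h hiaR
            · intro h; exact absurd (by simp) h
          · have hxF' : x ∈ F' := by
              rw [hF', Finset.mem_sdiff]; simp [hx, hxa, hxia]
            have hinvxa : inv x ≠ a := by
              intro h; exact hxia (by rw [← hinv x, h])
            simp only [Finset.mem_insert, hxa, hinvxa, false_or]
            exact hR x hxF'

/-- The mod-2 boundary of a mod-2 chain of half-edges. -/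
noncomputable def bnd (T : WGraph) (t : T.X → ZMod 2) : T.X → ZMod 2 :=
  ∑ x ∈ cfilter T.toPGraph.IsHalf Finset.univ, t x • Pi.single (T.rt x) 1

/-- The mod-2 indicator function of a finite set. -/
noncomputable def ind (T : WGraph) (S : Finset T.X) : T.X → ZMod 2 :=
  fun x => if x ∈ S then 1 else 0

lemma bnd_apply (T : WGraph) (t : T.X → ZMod 2) (u : T.X) :
    bnd T t u = ∑ h ∈ T.toPGraph.tangents u, t h := by
  classical
  have htan : T.toPGraph.tangents u
      = (cfilter T.toPGraph.IsHalf Finset.univ).filter (fun x => u = T.rt x) := by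
    ext x
    simp only [PGraph.tangents, mem_cfilter, Finset.mem_filter, Finset.mem_univ, true_and]
    tauto
  rw [htan, Finset.sum_filter, bnd]
  rw [Finset.sum_apply]
  apply Finset.sum_congr rfl
  intro x _
  rw [Pi.smul_apply, Pi.single_apply, smul_eq_mul, mul_ite, mul_one, mul_zero]

lemma bnd_add (T : WGraph) (t₁ t₂ : T.X → ZMod 2) :
    bnd T (t₁ + t₂) = bnd T t₁ + bnd T t₂ := by
  funext u
  rw [Pi.add_apply, bnd_apply, bnd_apply, bnd_apply, ← Finset.sum_add_distrib]
  rfl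

lemma card_inter_cast (T : WGraph) (u : T.X) (S : Finset T.X) :
    ((T.toPGraph.tangents u ∩ S).card : ZMod 2) = bnd T (ind T S) u := by
  classical
  rw [bnd_apply]
  unfold ind
  rw [Finset.sum_ite_mem]
  simp


/-- Let `T` be a tree and `D ⊆ L(T)` a set of legs of `T` with `#D`
even.  Then there exists exactly one cycle `C` in `T` whose set of legs is `D`. -/
theorem unique_cycle_with_given_legs
    (T : WGraph) (hT : IsTree T) (D : Finset T.X) (hD : ∀ p ∈ D, T.toPGraph.IsLeg p)
    (hEven : Even D.card) :
    ∃! C : Finset T.X, IsCycle T C ∧ T.toPGraph.legSet ∩ C = D := by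
  classical
  obtain ⟨⟨hne, hconn⟩, hgen⟩ := hT
  obtain ⟨x0⟩ := hne
  set v0 : T.X := T.rt x0 with hv0def
  have hv0 : T.toPGraph.IsVertex v0 := T.rt_idem x0
  have hv0m : v0 ∈ T.toPGraph.vertexSet := mem_vertexSet.mpr hv0
  -- basic facts
  have hinvol := T.inv_invol
  have hinj : Function.Injective T.inv := Function.Involutive.injective hinvol
  have hEHcl : ∀ x, T.toPGraph.IsEdgeHalf x → T.toPGraph.IsEdgeHalf (T.inv x) := by
    intro x hx
    have h1 : T.inv (T.inv x) = x := hinvol x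
    constructor
    · intro hfix
      have h2 : T.inv (T.rt (T.inv x)) = T.rt (T.inv x) := T.inv_fix_rt (T.inv x)
      rw [hfix, h1] at h2
      exact hx.2 h2.symm
    · rw [h1]; exact fun h => hx.2 h.symm
  have hvertleg : ∀ x, T.toPGraph.IsVertex x → T.inv x = x := by
    intro x hx
    have := T.inv_fix_rt x
    rwa [hx] at this
  -- edge-half set and its membership
  have hmemEH : ∀ x, x ∈ T.toPGraph.edgeHalfSet ↔ T.toPGraph.IsEdgeHalf x :=
    fun x => mem_edgeHalfSet
  -- choose a set of representatives of the edges
  obtain ⟨R, hRE, hRiff⟩ := exists_reps T.inv hinvol T.toPGraph.edgeHalfSet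
    (fun x hx => (hmemEH _).mpr (hEHcl x ((hmemEH x).mp hx)))
    (fun x hx => ((hmemEH x).mp hx).2)
  have hReh : ∀ x ∈ R, T.toPGraph.IsEdgeHalf x := fun x hx => (hmemEH x).mp (hRE hx)
  have hnotboth : ∀ x ∈ R, T.inv x ∉ R := fun x hx => (hRiff x (hRE hx)).mp hx
  have hcover : ∀ x, T.toPGraph.IsEdgeHalf x → x ∉ R → T.inv x ∈ R := by
    intro x hx hxR
    by_contra h
    exact hxR ((hRiff x ((hmemEH x).mpr hx)).mpr h)
  have heqEH : T.toPGraph.edgeHalfSet = R ∪ R.image T.inv := by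
    ext x
    rw [Finset.mem_union, Finset.mem_image, hmemEH]
    constructor
    · intro hx
      by_cases h : x ∈ R
      · exact Or.inl h
      · exact Or.inr ⟨T.inv x, hcover x hx h, hinvol x⟩
    · rintro (h | ⟨y, hy, rfl⟩)
      · exact hReh x h
      · exact hEHcl y (hReh y hy)
  have hdisj : Disjoint R (R.image T.inv) := by
    rw [Finset.disjoint_left]
    rintro x hx hx2
    obtain ⟨y, hy, rfl⟩ := Finset.mem_image.mp hx2
    exact hnotboth y hy hx
  -- number of edges = card R
  have hcardEH : (T.toPGraph.edgeHalfSet).card = 2 * R.card := by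
    rw [heqEH, Finset.card_union_of_disjoint hdisj, Finset.card_image_of_injective _ hinj]
    ring
  have hNE : T.toPGraph.numEdges = R.card := by
    rw [PGraph.numEdges, hcardEH]; omega
  -- the ZMod 2 span of edge vectors
  set v : {x // x ∈ R} → (T.X → ZMod 2) :=
    fun i => Pi.single (T.rt i.val) 1 + Pi.single (T.rt (T.inv i.val)) 1 with hvdef
  set W : Submodule (ZMod 2) (T.X → ZMod 2) := Submodule.span (ZMod 2) (Set.range v) with hWdef
  have h2 : ∀ a : ZMod 2, a + a = 0 := by decide
  have hself : ∀ a : T.X → ZMod 2, a + a = 0 := by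
    intro a; funext t; rw [Pi.add_apply]; exact h2 (a t)
  -- connectivity: differences of vertex basis vectors lie in W
  have hconnW : ∀ x y : T.X,
      Pi.single (T.rt x) (1 : ZMod 2) + Pi.single (T.rt y) 1 ∈ W := by
    intro x y
    have h := hconn x y
    induction h with
    | rel a b hab =>
      rcases hab with hab | hab
      · subst hab
        rw [T.rt_idem, hself]
        exact W.zero_mem
      · subst hab
        by_cases hfa : T.inv a = a
        · rw [hfa, hself]; exact W.zero_mem
        · have hha : T.toPGraph.IsHalf a := by
            intro hv
            exact hfa (hvertleg a hv)
          have hEa : T.toPGraph.IsEdgeHalf a := ⟨hha, hfa⟩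
          by_cases hR : a ∈ R
          · exact Submodule.subset_span ⟨⟨a, hR⟩, rfl⟩
          · have hR2 : T.inv a ∈ R := hcover a hEa hR
            have hveq : v ⟨T.inv a, hR2⟩
                = Pi.single (T.rt (T.inv a)) 1 + Pi.single (T.rt a) 1 := by
              simp only [hvdef, hinvol a]
            rw [add_comm, ← hveq]
            exact Submodule.subset_span ⟨⟨T.inv a, hR2⟩, rfl⟩
    | refl a => rw [hself]; exact W.zero_mem
    | symm a b _ ih => rw [add_comm]; exact ih
    | trans a b c _ _ ih1 ih2 =>
      have key : (Pi.single (T.rt a) 1 : T.X → ZMod 2) + Pi.single (T.rt c) 1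
          = ((Pi.single (T.rt a) 1 : T.X → ZMod 2) + Pi.single (T.rt b) 1)
            + ((Pi.single (T.rt b) 1 : T.X → ZMod 2) + Pi.single (T.rt c) 1) := by
        have : ((Pi.single (T.rt a) 1 : T.X → ZMod 2) + Pi.single (T.rt b) 1)
            + (Pi.single (T.rt b) 1 + Pi.single (T.rt c) 1)
            = ((Pi.single (T.rt a) 1 : T.X → ZMod 2) + Pi.single (T.rt c) 1)
              + ((Pi.single (T.rt b) 1 : T.X → ZMod 2) + Pi.single (T.rt b) 1) := by abel
        rw [this, hself, add_zero]
      rw [key]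
      exact W.add_mem ih1 ih2
  -- lower bound on the rank of W
  have hWfin : Module.Finite (ZMod 2) W := by infer_instance
  have hlow : T.toPGraph.vertexSet.card - 1 ≤ Module.finrank (ZMod 2) W := by
    have hιvert : ∀ u : {u // u ∈ T.toPGraph.vertexSet.erase v0}, T.rt u.val = u.val := by
      intro u
      exact mem_vertexSet.mp (Finset.mem_erase.mp u.2).2
    have hιne : ∀ u : {u // u ∈ T.toPGraph.vertexSet.erase v0}, u.val ≠ v0 :=
      fun u => (Finset.mem_erase.mp u.2).1
    set w : {u // u ∈ T.toPGraph.vertexSet.erase v0} → (T.X → ZMod 2) :=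
      fun u => Pi.single u.val 1 + Pi.single v0 1 with hwdef
    have hwW : ∀ u, w u ∈ W := by
      intro u
      have := hconnW u.val v0
      rwa [hιvert u, hv0] at this
    set w' : {u // u ∈ T.toPGraph.vertexSet.erase v0} → W := fun u => ⟨w u, hwW u⟩ with hw'def
    have hli : LinearIndependent (ZMod 2) w' := by
      apply LinearIndependent.of_comp W.subtype
      have hcomp : ⇑W.subtype ∘ w' = w := rfl
      rw [hcomp]
      rw [Fintype.linearIndependent_iff]
      intro g hg u0
      have hev := congrFun hg u0.val
      simp only [Finset.sum_apply, Pi.smul_apply, hwdef, Pi.add_apply, Pi.single_apply,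
        smul_eq_mul, Pi.zero_apply, if_neg (hιne u0), add_zero, mul_ite, mul_one, mul_zero,
        Subtype.coe_inj, Finset.sum_ite_eq, Finset.mem_univ, if_true] at hev
      exact hev
    have hcard : Fintype.card {u // u ∈ T.toPGraph.vertexSet.erase v0}
        = T.toPGraph.vertexSet.card - 1 := by
      rw [Fintype.card_coe, Finset.card_erase_of_mem hv0m]
    rw [← hcard]
    exact hli.fintype_card_le_finrank
  -- upper bound
  have hup : Module.finrank (ZMod 2) W ≤ R.card := by
    have h := finrank_range_le_card (R := ZMod 2) v
    rw [Fintype.card_coe] at h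
    exact h
  -- genus arithmetic
  have hNVpos : 1 ≤ T.toPGraph.vertexSet.card := Finset.card_pos.mpr ⟨v0, hv0m⟩
  have hgenus : (R.card : ℤ) - (T.toPGraph.vertexSet.card : ℤ) + 1
      + ∑ u ∈ T.toPGraph.vertexSet, (T.gw u : ℤ) = 0 := by
    rw [WGraph.genus] at hgen
    rw [← hNE]
    exact hgen
  have hgw0 : ∀ u ∈ T.toPGraph.vertexSet, T.gw u = 0 := by
    have hsumnn : (0:ℤ) ≤ ∑ u ∈ T.toPGraph.vertexSet, (T.gw u : ℤ) :=
      Finset.sum_nonneg fun u _ => Int.natCast_nonneg _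
    have h1 : (R.card : ℤ) ≤ (T.toPGraph.vertexSet.card : ℤ) - 1 := by linarith
    have h2' : (T.toPGraph.vertexSet.card : ℤ) - 1 ≤ (R.card : ℤ) := by
      have := hlow.trans hup
      omega
    have hzero : ∑ u ∈ T.toPGraph.vertexSet, (T.gw u : ℤ) = 0 := by linarith
    intro u hu
    have := (Finset.sum_eq_zero_iff_of_nonneg
      (fun u _ => Int.natCast_nonneg (T.gw u))).mp hzero u hu
    exact_mod_cast this
  have hcardR : R.card = T.toPGraph.vertexSet.card - 1 := by
    have hsumnn : (0:ℤ) ≤ ∑ u ∈ T.toPGraph.vertexSet, (T.gw u : ℤ) :=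
      Finset.sum_nonneg fun u _ => Int.natCast_nonneg _
    have h2' := hlow.trans hup
    omega
  have hfr : Module.finrank (ZMod 2) W = R.card := by omega
  -- linear independence of the edge vectors
  have hliv : LinearIndependent (ZMod 2) v := by
    rw [linearIndependent_iff_card_eq_finrank_span]
    show Fintype.card {x // x ∈ R} = Module.finrank (ZMod 2) W
    rw [hfr, Fintype.card_coe]
  -- the halves Finset
  have hmemhalves : ∀ x : T.X,
      x ∈ cfilter T.toPGraph.IsHalf (Finset.univ : Finset T.X) ↔ T.toPGraph.IsHalf x :=
    fun x => mem_cfilter.trans ⟨fun h => h.2, fun h => ⟨Finset.mem_univ x, h⟩⟩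
  -- representation of boundaries of inv-invariant edge chains
  have hrep : ∀ t : T.X → ZMod 2, (∀ x, t (T.inv x) = t x) →
      (∀ x, t x ≠ 0 → T.toPGraph.IsEdgeHalf x) →
      bnd T t = ∑ i : {x // x ∈ R}, t i.val • v i := by
    intro t hti hts
    have hsub : T.toPGraph.edgeHalfSet ⊆ cfilter T.toPGraph.IsHalf Finset.univ := by
      intro x hx; exact (hmemhalves x).mpr ((hmemEH x).mp hx).1
    have hz : ∀ x ∈ cfilter T.toPGraph.IsHalf (Finset.univ : Finset T.X),
        x ∉ T.toPGraph.edgeHalfSet → t x • (Pi.single (T.rt x) 1 : T.X → ZMod 2) = 0 := by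
      intro x _ hxE
      have ht0 : t x = 0 := by
        by_contra h; exact hxE ((hmemEH x).mpr (hts x h))
      rw [ht0, zero_smul]
    rw [bnd, ← Finset.sum_subset hsub hz]
    rw [heqEH, Finset.sum_union hdisj, Finset.sum_image (fun x _ y _ h => hinj h)]
    have hcg : ∀ x ∈ R, t (T.inv x) • (Pi.single (T.rt (T.inv x)) 1 : T.X → ZMod 2)
        = t x • (Pi.single (T.rt (T.inv x)) 1 : T.X → ZMod 2) := fun x _ => by rw [hti]
    rw [Finset.sum_congr rfl hcg, ← Finset.sum_add_distrib]
    rw [Finset.univ_eq_attach]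
    have hrhs : ∀ i ∈ R.attach, t i.val • v i
        = t i.val • (Pi.single (T.rt i.val) 1 : T.X → ZMod 2)
          + t i.val • (Pi.single (T.rt (T.inv i.val)) 1 : T.X → ZMod 2) := by
      intro i _; rw [hvdef, smul_add]
    rw [Finset.sum_congr rfl hrhs,
      Finset.sum_attach R (fun x => t x • (Pi.single (T.rt x) 1 : T.X → ZMod 2)
        + t x • (Pi.single (T.rt (T.inv x)) 1 : T.X → ZMod 2))]
  -- the boundary of D
  have hbndD : bnd T (ind T D) = ∑ p ∈ D, Pi.single (T.rt p) (1 : ZMod 2) := by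
    have hDsub : D ⊆ cfilter T.toPGraph.IsHalf Finset.univ := by
      intro p hp; exact (hmemhalves p).mpr (hD p hp).1
    have hzD : ∀ x ∈ cfilter T.toPGraph.IsHalf (Finset.univ : Finset T.X),
        x ∉ D → ind T D x • (Pi.single (T.rt x) 1 : T.X → ZMod 2) = 0 := by
      intro x _ hxD
      have : ind T D x = 0 := by simp [ind, hxD]
      rw [this, zero_smul]
    rw [bnd, ← Finset.sum_subset hDsub hzD]
    apply Finset.sum_congr rfl
    intro p hp
    have : ind T D p = 1 := by simp [ind, hp]
    rw [this, one_smul]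
  have hDW : bnd T (ind T D) ∈ W := by
    rw [hbndD]
    have hrw : ∀ p ∈ D, Pi.single (T.rt p) (1 : ZMod 2)
        = ((Pi.single (T.rt p) 1 : T.X → ZMod 2) + Pi.single v0 1) + Pi.single v0 1 := by
      intro p _; rw [add_assoc, hself, add_zero]
    rw [Finset.sum_congr rfl hrw, Finset.sum_add_distrib, Finset.sum_const]
    obtain ⟨m, hm⟩ := hEven
    have hzero : D.card • (Pi.single v0 (1 : ZMod 2) : T.X → ZMod 2) = 0 := by
      rw [hm, add_nsmul, hself]
    rw [hzero, add_zero]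
    apply Submodule.sum_mem
    intro p _
    have := hconnW p v0
    rwa [hv0] at this
  obtain ⟨c, hc⟩ := (Submodule.mem_span_range_iff_exists_fun (ZMod 2)).mp hDW
  -- the edge chain
  set s : T.X → ZMod 2 := fun x =>
    if hx : x ∈ R then c ⟨x, hx⟩ else if hx2 : T.inv x ∈ R then c ⟨T.inv x, hx2⟩ else 0
    with hsdef
  have hsR : ∀ x (hx : x ∈ R), s x = c ⟨x, hx⟩ := fun x hx => dif_pos hx
  have hsR2 : ∀ x (hx2 : T.inv x ∈ R), x ∉ R → s x = c ⟨T.inv x, hx2⟩ := by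
    intro x hx2 hx
    show (if hx : x ∈ R then c ⟨x, hx⟩ else if hx2 : T.inv x ∈ R then c ⟨T.inv x, hx2⟩ else 0)
      = c ⟨T.inv x, hx2⟩
    rw [dif_neg hx, dif_pos hx2]
  have hs0 : ∀ x, x ∉ R → T.inv x ∉ R → s x = 0 := by
    intro x h1 h2
    show (if hx : x ∈ R then c ⟨x, hx⟩ else if hx2 : T.inv x ∈ R then c ⟨T.inv x, hx2⟩ else 0) = 0
    rw [dif_neg h1, dif_neg h2]
  have hsinv : ∀ x, s (T.inv x) = s x := by
    intro x
    by_cases hx : x ∈ R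
    · have h1 : T.inv x ∉ R := hnotboth x hx
      have h2 : T.inv (T.inv x) ∈ R := by rw [hinvol]; exact hx
      rw [hsR x hx, hsR2 (T.inv x) h2 h1]
      congr 1
      exact Subtype.ext (hinvol x)
    · by_cases hx2 : T.inv x ∈ R
      · rw [hsR2 x hx2 hx, hsR (T.inv x) hx2]
      · have h2 : T.inv (T.inv x) ∉ R := by rw [hinvol]; exact hx
        rw [hs0 x hx hx2, hs0 (T.inv x) hx2 h2]
  have hssupp : ∀ x, s x ≠ 0 → T.toPGraph.IsEdgeHalf x := by
    intro x hx
    by_contra hEH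
    have h1 : x ∉ R := fun h => hEH (hReh x h)
    have h2 : T.inv x ∉ R := by
      intro h
      have := hEHcl (T.inv x) (hReh _ h)
      rw [hinvol] at this
      exact hEH this
    exact hx (hs0 x h1 h2)
  have hbnds : bnd T s = bnd T (ind T D) := by
    rw [hrep s hsinv hssupp, ← hc]
    apply Finset.sum_congr rfl
    intro i _
    rw [hsR i.val i.2]
  -- construction of the cycle C
  set SuppS : Finset T.X := cfilter (fun x => s x ≠ 0) Finset.univ with hSuppdef
  have hmemSupp : ∀ x, x ∈ SuppS ↔ s x ≠ 0 :=
    fun x => mem_cfilter.trans ⟨fun h => h.2, fun h => ⟨Finset.mem_univ x, h⟩⟩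
  set A0 : Finset T.X := D ∪ SuppS with hA0def
  set C : Finset T.X := A0 ∪ A0.image T.rt with hCdef
  have hmemA0 : ∀ x, x ∈ A0 ↔ (x ∈ D ∨ s x ≠ 0) := by
    intro x; rw [hA0def, Finset.mem_union, hmemSupp]
  have hA0half : ∀ x ∈ A0, T.toPGraph.IsHalf x := by
    intro x hx
    rcases (hmemA0 x).mp hx with h | h
    · exact (hD x h).1
    · exact (hssupp x h).1
  have hmemC : ∀ x, x ∈ C ↔ (x ∈ A0 ∨ ∃ a ∈ A0, T.rt a = x) := by
    intro x; rw [hCdef, Finset.mem_union, Finset.mem_image]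
  have hlegC : T.toPGraph.legSet ∩ C = D := by
    ext x
    rw [Finset.mem_inter, mem_legSet]
    constructor
    · rintro ⟨hleg, hxC⟩
      rcases (hmemC x).mp hxC with h | ⟨a, ha, rfl⟩
      · rcases (hmemA0 x).mp h with h' | h'
        · exact h'
        · exact absurd hleg.2 (hssupp x h').2
      · exact absurd (T.rt_idem a) hleg.1
    · intro hx
      exact ⟨hD x hx, (hmemC x).mpr (Or.inl ((hmemA0 x).mpr (Or.inl hx)))⟩
  have hsubC : T.toPGraph.IsSubgraph C := by
    constructor
    · intro x hx
      rcases (hmemC x).mp hx with h | ⟨a, ha, rfl⟩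
      · exact (hmemC _).mpr (Or.inr ⟨x, h, rfl⟩)
      · rw [T.rt_idem]; exact hx
    · intro x hx
      rcases (hmemC x).mp hx with h | ⟨a, ha, rfl⟩
      · rcases (hmemA0 x).mp h with h' | h'
        · rw [(hD x h').2]; exact hx
        · refine (hmemC _).mpr (Or.inl ((hmemA0 _).mpr (Or.inr ?_)))
          rw [hsinv]; exact h'
      · rw [T.inv_fix_rt]; exact hx
  have hone : ∀ a : ZMod 2, a ≠ 0 → a = 1 := by decide
  have hcancel : ∀ a b : ZMod 2, a + b = 0 → a = b := by decide
  have hindsum : ind T (D ∪ SuppS) = ind T D + s := by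
    funext x
    by_cases hxD : x ∈ D
    · have hsx : s x = 0 := by
        by_contra h
        exact absurd (hD x hxD).2 (hssupp x h).2
      simp [ind, hxD, hsx]
    · by_cases hxS : x ∈ SuppS
      · have h1 : s x = 1 := hone _ ((hmemSupp x).mp hxS)
        simp [ind, hxD, hxS, h1]
      · have hsx : s x = 0 := by
          by_contra h; exact hxS ((hmemSupp x).mpr h)
        simp [ind, hxD, hxS, hsx]
  have hbndDS : bnd T (ind T (D ∪ SuppS)) = 0 := by
    rw [hindsum, bnd_add, hbnds, hself]
  -- even natural number castings
  have hcast0 : ∀ n : ℕ, Even n → (n : ZMod 2) = 0 := by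
    intro n hn
    obtain ⟨k, hk⟩ := hn
    have : n = 2 * k := by omega
    rw [this]
    push_cast
    rw [show (2 : ZMod 2) = 0 by decide, zero_mul]
  have hcast0' : ∀ n : ℕ, (n : ZMod 2) = 0 → Even n := by
    intro n hn
    have := (ZMod.natCast_eq_zero_iff n 2).mp hn
    obtain ⟨k, hk⟩ := this
    exact ⟨k, by omega⟩
  -- vertex conditions for C
  have htanC : ∀ u, T.toPGraph.IsVertex u →
      T.toPGraph.tangents u ∩ C = T.toPGraph.tangents u ∩ (D ∪ SuppS) := by
    intro u hu
    ext x
    rw [Finset.mem_inter, Finset.mem_inter]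
    constructor
    · rintro ⟨ht, hxC⟩
      refine ⟨ht, ?_⟩
      rcases (hmemC x).mp hxC with h | ⟨a, ha, rfl⟩
      · rw [hA0def] at h; exact h
      · exact absurd (T.rt_idem a) (mem_tangents.mp ht).1
    · rintro ⟨ht, hx⟩
      refine ⟨ht, (hmemC x).mpr (Or.inl ?_)⟩
      rw [hA0def]; exact hx
  have hvertC : ∀ u ∈ C, T.toPGraph.IsVertex u →
      Even (T.toPGraph.valIn C u) ∧
      (2 : ℤ) - 2 * (T.gw u : ℤ) - (T.toPGraph.valIn C u : ℤ) ≤ 0 := by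
    intro u huC hu
    have hcast : ((T.toPGraph.valIn C u : ℕ) : ZMod 2) = 0 := by
      rw [PGraph.valIn, htanC u hu, card_inter_cast, hbndDS]
      rfl
    have heven : Even (T.toPGraph.valIn C u) := hcast0' _ hcast
    have hpos : 0 < T.toPGraph.valIn C u := by
      rw [PGraph.valIn, Finset.card_pos]
      rcases (hmemC u).mp huC with h | ⟨a, ha, rfl⟩
      · exact absurd hu (hA0half u h)
      · refine ⟨a, Finset.mem_inter.mpr ⟨mem_tangents.mpr ⟨hA0half a ha, rfl⟩, ?_⟩⟩
        exact (hmemC a).mpr (Or.inl ha)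
    have hgw : T.gw u = 0 := hgw0 u (mem_vertexSet.mpr hu)
    have h2le : 2 ≤ T.toPGraph.valIn C u := by
      obtain ⟨k, hk⟩ := heven; omega
    refine ⟨heven, ?_⟩
    rw [hgw]
    push_cast
    omega
  have hcycC : IsCycle T C := ⟨hsubC, hvertC⟩
  -- uniqueness
  refine ⟨C, ⟨hcycC, hlegC⟩, ?_⟩
  rintro C' ⟨hC'cyc, hC'legs⟩
  have hDC' : D ⊆ C' := by
    rw [← hC'legs]; exact Finset.inter_subset_right
  set t' : T.X → ZMod 2 := fun x =>
    if x ∈ C' ∧ T.toPGraph.IsEdgeHalf x then 1 else 0 with ht'def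
  have ht'val : ∀ x, t' x = if x ∈ C' ∧ T.toPGraph.IsEdgeHalf x then 1 else 0 := fun x => rfl
  have hiff : ∀ x, (x ∈ C' ∧ T.toPGraph.IsEdgeHalf x) →
      (T.inv x ∈ C' ∧ T.toPGraph.IsEdgeHalf (T.inv x)) :=
    fun x hx => ⟨hC'cyc.1.2 x hx.1, hEHcl x hx.2⟩
  have hiff2 : ∀ x, (T.inv x ∈ C' ∧ T.toPGraph.IsEdgeHalf (T.inv x)) ↔
      (x ∈ C' ∧ T.toPGraph.IsEdgeHalf x) := by
    intro x
    constructor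
    · intro h
      have := hiff (T.inv x) h
      rwa [hinvol] at this
    · exact hiff x
  have hti' : ∀ x, t' (T.inv x) = t' x := by
    intro x
    rw [ht'val, ht'val]
    by_cases h : x ∈ C' ∧ T.toPGraph.IsEdgeHalf x
    · rw [if_pos h, if_pos ((hiff2 x).mpr h)]
    · rw [if_neg h, if_neg (fun hh => h ((hiff2 x).mp hh))]
  have hts' : ∀ x, t' x ≠ 0 → T.toPGraph.IsEdgeHalf x := by
    intro x hx
    by_contra h
    apply hx
    rw [ht'val, if_neg (fun hh => h hh.2)]
  -- every half-edge of a subgraph whose root is u is a tangent at u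
  have htanempty : ∀ u, ¬ T.toPGraph.IsVertex u → T.toPGraph.tangents u = ∅ := by
    intro u hu
    rw [Finset.eq_empty_iff_forall_notMem]
    intro x hx
    obtain ⟨hhx, hrx⟩ := mem_tangents.mp hx
    apply hu
    show T.rt u = u
    conv_lhs => rw [← hrx]
    rw [T.rt_idem, hrx]
  have hbndt' : bnd T t' = bnd T (ind T D) := by
    funext u
    rw [bnd_apply, bnd_apply]
    by_cases hu : T.toPGraph.IsVertex u
    · by_cases huC : u ∈ C'
      · have hkey : ∀ h ∈ T.toPGraph.tangents u, t' h + ind T D h = ind T C' h := by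
          intro h hh
          obtain ⟨hhh, hrh⟩ := mem_tangents.mp hh
          rw [ht'val]
          by_cases hC : h ∈ C'
          · by_cases hEH : T.toPGraph.IsEdgeHalf h
            · have hhD : h ∉ D := fun hd => hEH.2 (hD h hd).2
              simp [ind, hC, hEH, hhD]
            · have hleg : T.toPGraph.IsLeg h := by
                by_contra hl
                exact hEH ⟨hhh, fun he => hl ⟨hhh, he⟩⟩
              have hhD : h ∈ D := by
                rw [← hC'legs, Finset.mem_inter, mem_legSet]
                exact ⟨hleg, hC⟩
              simp [ind, hC, hEH, hhD]
          · have hhD : h ∉ D := fun hd => hC (hDC' hd)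
            simp [ind, hC, hhD]
        have hsum : (∑ h ∈ T.toPGraph.tangents u, t' h)
            + (∑ h ∈ T.toPGraph.tangents u, ind T D h)
            = ((T.toPGraph.tangents u ∩ C').card : ZMod 2) := by
          rw [← Finset.sum_add_distrib, Finset.sum_congr rfl hkey, card_inter_cast, bnd_apply]
        have heq0 : ((T.toPGraph.tangents u ∩ C').card : ZMod 2) = 0 := by
          have := (hC'cyc.2 u huC hu).1
          rw [PGraph.valIn] at this
          exact hcast0 _ this
        rw [heq0] at hsum
        exact hcancel _ _ hsum
      · apply Finset.sum_congr rfl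
        intro h hh
        obtain ⟨hhh, hrh⟩ := mem_tangents.mp hh
        have hhC : h ∉ C' := by
          intro hc
          apply huC
          rw [← hrh]
          exact hC'cyc.1.1 h hc
        have h1 : t' h = 0 := by rw [ht'val, if_neg (fun hc => hhC hc.1)]
        have h2 : ind T D h = 0 := by
          have : h ∉ D := fun hd => hhC (hDC' hd)
          simp [ind, this]
        rw [h1, h2]
    · rw [htanempty u hu]
      simp
  -- coefficient comparison
  have hrept' := hrep t' hti' hts'
  have heqsum : ∑ i : {x // x ∈ R}, t' i.val • v i = ∑ i : {x // x ∈ R}, c i • v i := by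
    rw [← hrept', hbndt', ← hc]
  have hcoef : ∀ i : {x // x ∈ R}, t' i.val = c i := by
    have hz : ∑ i : {x // x ∈ R}, (t' i.val - c i) • v i = 0 := by
      have : ∀ i : {x // x ∈ R}, (t' i.val - c i) • v i = t' i.val • v i - c i • v i :=
        fun i => sub_smul _ _ _
      rw [Finset.sum_congr rfl (fun i _ => this i), Finset.sum_sub_distrib, heqsum, sub_self]
    intro i
    have := Fintype.linearIndependent_iff.mp hliv (fun i => t' i.val - c i) hz i
    have h := sub_eq_zero.mp this
    exact h
  have ht's : ∀ x, T.toPGraph.IsEdgeHalf x → t' x = s x := by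
    intro x hx
    by_cases hR : x ∈ R
    · rw [hsR x hR]; exact hcoef ⟨x, hR⟩
    · have h2 : T.inv x ∈ R := hcover x hx hR
      have e1 : t' (T.inv x) = c ⟨T.inv x, h2⟩ := hcoef ⟨T.inv x, h2⟩
      rw [← hti' x, e1, hsR2 x h2 hR]
  -- halves of C' and C agree
  have hmemCEH : ∀ x, T.toPGraph.IsEdgeHalf x → (x ∈ C ↔ s x ≠ 0) := by
    intro x hx
    constructor
    · intro hxC
      rcases (hmemC x).mp hxC with h | ⟨a, ha, rfl⟩
      · rcases (hmemA0 x).mp h with h' | h'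
        · exact absurd (hD x h').2 hx.2
        · exact h'
      · exact absurd (T.rt_idem a) hx.1
    · intro hsx
      exact (hmemC x).mpr (Or.inl ((hmemA0 x).mpr (Or.inr hsx)))
  have hhalfeq : ∀ h, T.toPGraph.IsHalf h → (h ∈ C' ↔ h ∈ C) := by
    intro h hh
    by_cases hEH : T.toPGraph.IsEdgeHalf h
    · constructor
      · intro hc
        apply (hmemCEH h hEH).mpr
        rw [← ht's h hEH, ht'val, if_pos ⟨hc, hEH⟩]
        decide
      · intro hc
        have hs1 : s h ≠ 0 := (hmemCEH h hEH).mp hc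
        have ht1 : t' h ≠ 0 := by rw [ht's h hEH]; exact hs1
        by_contra hc'
        apply ht1
        rw [ht'val, if_neg (fun hcc => hc' hcc.1)]
    · have hleg : T.toPGraph.IsLeg h := by
        by_contra hl
        exact hEH ⟨hh, fun he => hl ⟨hh, he⟩⟩
      constructor
      · intro hc
        have : h ∈ D := by
          rw [← hC'legs, Finset.mem_inter, mem_legSet]; exact ⟨hleg, hc⟩
        exact (hmemC h).mpr (Or.inl ((hmemA0 h).mpr (Or.inl this)))
      · intro hc
        have : h ∈ D := by
          rw [← hlegC, Finset.mem_inter, mem_legSet]; exact ⟨hleg, hc⟩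
        exact hDC' this
  -- vertices agree
  have hvertexeq : ∀ x, T.toPGraph.IsVertex x → (x ∈ C' ↔ x ∈ C) := by
    intro x hx
    have hgw : T.gw x = 0 := hgw0 x (mem_vertexSet.mpr hx)
    constructor
    · intro hc
      have hchi := (hC'cyc.2 x hc hx).2
      rw [hgw] at hchi
      push_cast at hchi
      have hpos : 0 < T.toPGraph.valIn C' x := by omega
      rw [PGraph.valIn, Finset.card_pos] at hpos
      obtain ⟨h, hh⟩ := hpos
      obtain ⟨ht, hmem⟩ := Finset.mem_inter.mp hh
      obtain ⟨hhh, hrh⟩ := mem_tangents.mp ht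
      have : h ∈ C := (hhalfeq h hhh).mp hmem
      rw [← hrh]
      exact hsubC.1 h this
    · intro hc
      have hchi := (hcycC.2 x hc hx).2
      rw [hgw] at hchi
      push_cast at hchi
      have hpos : 0 < T.toPGraph.valIn C x := by omega
      rw [PGraph.valIn, Finset.card_pos] at hpos
      obtain ⟨h, hh⟩ := hpos
      obtain ⟨ht, hmem⟩ := Finset.mem_inter.mp hh
      obtain ⟨hhh, hrh⟩ := mem_tangents.mp ht
      have : h ∈ C' := (hhalfeq h hhh).mpr hmem
      rw [← hrh]
      exact hC'cyc.1.1 h this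
  ext x
  by_cases hx : T.toPGraph.IsVertex x
  · exact hvertexeq x hx
  · exact hhalfeq x hx



end TropDR
end

section
/- Let T be a tree and let b : L(T) → ℤ be a function on its legs with Σ_{p∈L(T)} b(p) = 0. Then there exists a unique harmonic slope assignment s : H(T) → ℤ on T with s(p) = b(p) for every leg p ∈ L(T). -/
namespace TropDR

open Finset

/-- A slope assignment on a graph `G`: an integer on each half-edge (extended by zero on
the vertices), antisymmetric on the two halves of every edge. -/
structure SlopeAssignment (G : PGraph) where
  s : G.X → ℤ
  vertex_zero : ∀ x, G.IsVertex x → s x = 0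
  edge_antisym : ∀ h, G.IsEdgeHalf h → s (G.inv h) = - s h

/-- A slope assignment is harmonic if the outgoing slopes at every vertex sum to zero. -/
def SlopeAssignment.Harmonic {G : PGraph} (σ : SlopeAssignment G) : Prop :=
  ∀ v, G.IsVertex v → ∑ h ∈ G.tangents v, σ.s h = 0

lemma SlopeAssignment.ext' {G : PGraph} {σ τ : SlopeAssignment G} (h : σ.s = τ.s) : σ = τ := by
  cases σ; cases τ; simpa using h

lemma eqvGen_map {α β : Type*} {R : α → α → Prop} {R' : β → β → Prop} (f : α → β)
    (hf : ∀ a b, R a b → Relation.EqvGen R' (f a) (f b)) :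
    ∀ {a b}, Relation.EqvGen R a b → Relation.EqvGen R' (f a) (f b) := by
  intro a b h
  induction h with
  | rel a b hab => exact hf _ _ hab
  | refl a => exact Relation.EqvGen.refl _
  | symm a b _ ih => exact Relation.EqvGen.symm _ _ ih
  | trans a b c _ _ ih1 ih2 => exact Relation.EqvGen.trans _ _ _ ih1 ih2

namespace PGraph

variable {G : PGraph}

lemma isVertex_rt (x : G.X) : G.IsVertex (G.rt x) := G.rt_idem x

lemma inv_of_vertex {x : G.X} (h : G.IsVertex x) : G.inv x = x := by
  have := G.inv_fix_rt x
  rwa [h] at this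

lemma IsEdgeHalf.inv {x : G.X} (h : G.IsEdgeHalf x) : G.IsEdgeHalf (G.inv x) := by
  constructor
  · intro hc
    have h1 : G.inv (G.inv x) = G.inv x := inv_of_vertex hc
    rw [G.inv_invol] at h1
    exact h.2 h1.symm
  · rw [G.inv_invol]
    intro hc
    exact h.2 hc.symm

lemma leg_or_edgeHalf {x : G.X} (h : G.IsHalf x) : G.IsLeg x ∨ G.IsEdgeHalf x := by
  by_cases hx : G.inv x = x
  · exact Or.inl ⟨h, hx⟩
  · exact Or.inr ⟨h, hx⟩

lemma IsLeg.not_edgeHalf {x : G.X} (h : G.IsLeg x) : ¬ G.IsEdgeHalf x := fun hc => hc.2 h.2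

lemma mem_tangents {v x : G.X} : x ∈ G.tangents v ↔ G.IsHalf x ∧ G.rt x = v := by
  simp [tangents, mem_cfilter]

lemma mem_legSet {x : G.X} : x ∈ G.legSet ↔ G.IsLeg x := by
  simp [legSet, mem_cfilter]

lemma mem_edgeHalfSet {x : G.X} : x ∈ G.edgeHalfSet ↔ G.IsEdgeHalf x := by
  simp [edgeHalfSet, mem_cfilter]

lemma mem_vertexSet {x : G.X} : x ∈ G.vertexSet ↔ G.IsVertex x := by
  simp [vertexSet, mem_cfilter]

end PGraph

lemma eqvGen_iff {α : Type*} {R : α → α → Prop} (Q : α → Prop)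
    (h : ∀ a b, R a b → (Q a ↔ Q b)) :
    ∀ {a b}, Relation.EqvGen R a b → (Q a ↔ Q b) := by
  intro a b hab
  induction hab with
  | rel a b hab => exact h a b hab
  | refl a => exact Iff.rfl
  | symm a b _ ih => exact ih.symm
  | trans a b c _ _ ih1 ih2 => exact ih1.trans ih2

/-- The number of edge-halves at a vertex. -/
noncomputable def edgevalence (G : PGraph) (v : G.X) : ℕ :=
  (cfilter G.IsEdgeHalf (G.tangents v)).card

lemma sum_edgevalence (G : PGraph) :
    ∑ v ∈ G.vertexSet, edgevalence G v = G.edgeHalfSet.card := by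
  classical
  rw [Finset.card_eq_sum_card_fiberwise (f := G.rt) (t := G.vertexSet)
    (fun x _ => PGraph.mem_vertexSet.2 (PGraph.isVertex_rt x))]
  apply Finset.sum_congr rfl
  intro u _
  unfold edgevalence
  congr 1
  ext x
  rw [Finset.mem_filter, PGraph.mem_edgeHalfSet, mem_cfilter, PGraph.mem_tangents]
  exact ⟨fun h => ⟨h.2, h.1.2⟩, fun h => ⟨⟨h.1.1, h.2⟩, h.1⟩⟩

lemma exists_low_vertex (T : WGraph) (hT : IsTree T) :
    ∃ u, T.toPGraph.IsVertex u ∧ edgevalence T.toPGraph u + 2 * T.gw u ≤ 1 := by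
  classical
  by_contra hcon
  push_neg at hcon
  have hsum : 2 * T.toPGraph.vertexSet.card ≤
      ∑ u ∈ T.toPGraph.vertexSet, (edgevalence T.toPGraph u + 2 * T.gw u) := by
    calc 2 * T.toPGraph.vertexSet.card = ∑ _u ∈ T.toPGraph.vertexSet, 2 := by
          rw [Finset.sum_const]; ring
      _ ≤ _ := Finset.sum_le_sum (fun u hu => hcon u (PGraph.mem_vertexSet.1 hu))
  rw [Finset.sum_add_distrib, sum_edgevalence, ← Finset.mul_sum] at hsum
  have hgen : T.genus = 0 := hT.2
  unfold WGraph.genus at hgen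
  have hS : ∑ v ∈ T.toPGraph.vertexSet, (T.gw v : ℤ) =
      ((∑ v ∈ T.toPGraph.vertexSet, T.gw v : ℕ) : ℤ) := by push_cast; ring
  rw [hS] at hgen
  unfold PGraph.numEdges PGraph.numVertices at hgen
  omega

/-- In the star case (a vertex `u` with no incident edge-halves in a connected graph),
every element is `u` or rooted at `u`. -/
lemma star_case (T : PGraph) (hconn : T.Connected) (u : T.X) (hu : T.IsVertex u)
    (h0 : cfilter T.IsEdgeHalf (T.tangents u) = ∅) :
    ∀ x : T.X, x = u ∨ T.rt x = u := by
  have hu' : T.rt u = u := hu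
  have hinvu : T.inv u = u := PGraph.inv_of_vertex hu
  have hleg : ∀ x, T.rt x = u → x ≠ u → T.inv x = x := by
    intro x hx hne
    have hhalf : T.IsHalf x := by
      intro hc; exact hne (by rw [← hx, hc])
    rcases PGraph.leg_or_edgeHalf hhalf with hl | he
    · exact hl.2
    · exfalso
      have : x ∈ cfilter T.IsEdgeHalf (T.tangents u) :=
        mem_cfilter.2 ⟨PGraph.mem_tangents.2 ⟨hhalf, hx⟩, he⟩
      rw [h0] at this; exact absurd this (Finset.notMem_empty x)
  have key : ∀ a b, (T.rt a = b ∨ T.inv a = b) → ((a = u ∨ T.rt a = u) ↔ (b = u ∨ T.rt b = u)) := by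
    intro a b hab
    rcases hab with h | h
    · constructor
      · rintro (rfl | ha)
        · right; rw [← h, T.rt_idem]; exact hu'
        · left; rw [← h, ha]
      · rintro (rfl | hb)
        · right; rw [← T.rt_idem a, h]; exact hu'
        · right; rw [← hb, ← h, T.rt_idem]
    · constructor
      · rintro (rfl | ha)
        · left; rw [← h, hinvu]
        · by_cases hau : a = u
          · subst hau; left; rw [← h, hinvu]
          · right; rw [← h, hleg a ha hau]; exact ha
      · rintro (rfl | hb)
        · left; rw [← T.inv_invol a, h, hinvu]
        · by_cases hbu : b = u
          · subst hbu; left; rw [← T.inv_invol a, h, hinvu]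
          · right
            have hx : T.inv b = b := hleg b hb hbu
            have hab : a = b := by rw [← T.inv_invol a, h, hx]
            rw [hab]; exact hb
  intro x
  exact (eqvGen_iff _ key (hconn.2 u x)).1 (Or.inl rfl)
section Leaf

variable (T : WGraph) (v h₀ : T.X)
  (hv : T.toPGraph.IsVertex v)
  (hh : T.toPGraph.IsEdgeHalf h₀)
  (hrt : T.rt h₀ = v)
  (honly : ∀ x, T.toPGraph.IsEdgeHalf x → T.rt x = v → x = h₀)

include hv hh hrt honly

lemma k_rt : T.rt (T.inv h₀) ≠ v := by
  intro hc
  exact hh.2 (honly _ hh.inv hc)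

lemma v_ne_half {x : T.X} (hx : T.toPGraph.IsHalf x) : x ≠ v := by
  intro hc; subst hc; exact hx hv

lemma rt_ne_v_of_vertex {x : T.X} (hx : T.toPGraph.IsVertex x) (hxv : x ≠ v) :
    T.rt x ≠ v := by
  rw [hx]; exact hxv

lemma keep_closed : ∀ x : T.X, T.rt x ≠ v → x ≠ T.inv h₀ → T.rt (T.inv x) ≠ v := by
  intro x hx hne hc
  by_cases hxv : T.inv x = v
  · have hxx : x = v := by rw [← T.inv_invol x, hxv, PGraph.inv_of_vertex hv]
    rw [hxx] at hx; exact hx hv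
  · have hhalf : T.toPGraph.IsHalf (T.inv x) := by
      intro h; exact hxv (by rw [← hc, h])
    rcases PGraph.leg_or_edgeHalf hhalf with hl | he
    · have hxx : T.inv x = x := (hl.2.symm).trans (T.inv_invol x)
      rw [hxx] at hc; exact hx hc
    · exact hne (by rw [← T.inv_invol x, honly _ he hc])

/-- The tree with the leaf vertex `v` (and all half-edges at it) deleted. -/
@[reducible] noncomputable def PDel : PGraph where
  X := {x : T.X // T.rt x ≠ v}
  fintypeX := inferInstance
  decEqX := inferInstance
  rt := fun x => ⟨T.rt x.1, by rw [T.rt_idem]; exact x.2⟩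
  inv := fun x => if hx : x.1 = T.inv h₀ then x
    else ⟨T.inv x.1, keep_closed T v h₀ hv hh hrt honly x.1 x.2 hx⟩
  rt_idem := by intro x; apply Subtype.ext; simp [T.rt_idem]
  inv_invol := by
    intro x
    by_cases hx : x.1 = T.inv h₀
    · simp [hx]
    · have h1 : (T.inv x.1) ≠ T.inv h₀ := by
        intro hc
        have hxh : x.1 = h₀ := by rw [← T.inv_invol x.1, hc, T.inv_invol]
        exact x.2 (by rw [hxh, hrt])
      simp only [dif_neg hx, dif_neg h1]
      apply Subtype.ext
      simp [T.inv_invol]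
  inv_fix_rt := by
    intro x
    have h2 : T.rt x.1 ≠ T.inv h₀ := by
      intro hc
      have h1 : T.toPGraph.IsHalf (T.inv h₀) := hh.inv.1
      exact h1 (by rw [← hc, T.rt_idem, hc])
    apply Subtype.ext
    simp only [dif_neg h2]
    exact T.inv_fix_rt x.1

noncomputable def Tdel : WGraph where
  toPGraph := PDel T v h₀ hv hh hrt honly
  gw := fun x => T.gw x.1

set_option linter.unusedSectionVars false

local notation "T'" => PDel T v h₀ hv hh hrt honly

lemma del_rt (x : (T').X) : ((T').rt x).1 = T.rt x.1 := rfl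

lemma del_isVertex (x : (T').X) : (T').IsVertex x ↔ T.toPGraph.IsVertex x.1 := by
  unfold PGraph.IsVertex
  rw [Subtype.ext_iff]

lemma del_isHalf (x : (T').X) : (T').IsHalf x ↔ T.toPGraph.IsHalf x.1 := by
  unfold PGraph.IsHalf
  rw [ne_eq, Subtype.ext_iff]

lemma del_inv_k (x : (T').X) (hx : x.1 = T.inv h₀) : (T').inv x = x := by
  show dite _ _ _ = x
  rw [dif_pos hx]

lemma del_inv_ne (x : (T').X) (hx : x.1 ≠ T.inv h₀) : ((T').inv x).1 = T.inv x.1 := by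
  show (dite _ _ _ : (T').X).1 = _
  rw [dif_neg hx]

lemma ne_k_of_leg {x : T.X} (hx : T.toPGraph.IsLeg x) : x ≠ T.inv h₀ := by
  intro hc
  exact hh.inv.2 (by rw [← hc, hx.2])

lemma del_isLeg (x : (T').X) :
    (T').IsLeg x ↔ (T.toPGraph.IsLeg x.1 ∨ x.1 = T.inv h₀) := by
  constructor
  · intro hx
    by_cases hk : x.1 = T.inv h₀
    · exact Or.inr hk
    · left
      refine ⟨(del_isHalf T v h₀ hv hh hrt honly x).1 hx.1, ?_⟩
      have := hx.2
      rw [Subtype.ext_iff, del_inv_ne T v h₀ hv hh hrt honly x hk] at this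
      exact this
  · rintro (hx | hx)
    · refine ⟨(del_isHalf T v h₀ hv hh hrt honly x).2 hx.1, ?_⟩
      apply Subtype.ext
      rw [del_inv_ne T v h₀ hv hh hrt honly x (ne_k_of_leg T v h₀ hv hh hrt honly hx)]
      exact hx.2
    · refine ⟨?_, del_inv_k T v h₀ hv hh hrt honly x hx⟩
      rw [del_isHalf T v h₀ hv hh hrt honly x, hx]
      exact hh.inv.1
lemma del_isEdgeHalf (x : (T').X) :
    (T').IsEdgeHalf x ↔ (T.toPGraph.IsEdgeHalf x.1 ∧ x.1 ≠ T.inv h₀) := by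
  constructor
  · intro hx
    have hk : x.1 ≠ T.inv h₀ := by
      intro hc
      exact hx.2 (del_inv_k T v h₀ hv hh hrt honly x hc)
    refine ⟨⟨(del_isHalf T v h₀ hv hh hrt honly x).1 hx.1, ?_⟩, hk⟩
    intro hc
    apply hx.2
    apply Subtype.ext
    rw [del_inv_ne T v h₀ hv hh hrt honly x hk, hc]
  · rintro ⟨hx, hk⟩
    refine ⟨(del_isHalf T v h₀ hv hh hrt honly x).2 hx.1, ?_⟩
    intro hc
    rw [Subtype.ext_iff, del_inv_ne T v h₀ hv hh hrt honly x hk] at hc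
    exact hx.2 hc

lemma u_ne_v (u : (T').X) : u.1 ≠ v := by
  intro hc
  apply u.2
  rw [hc]
  exact hv

lemma del_mem_tangents {u t : (T').X} :
    t ∈ (T').tangents u ↔ (T.toPGraph.IsHalf t.1 ∧ T.rt t.1 = u.1) := by
  rw [PGraph.mem_tangents, del_isHalf T v h₀ hv hh hrt honly t]
  constructor
  · rintro ⟨h1, h2⟩; exact ⟨h1, by rw [← del_rt T v h₀ hv hh hrt honly t, h2]⟩
  · rintro ⟨h1, h2⟩; exact ⟨h1, Subtype.ext h2⟩

lemma del_sum_tangents (u : (T').X) (f : T.X → ℤ) :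
    ∑ t ∈ (T').tangents u, f t.1 = ∑ t ∈ T.toPGraph.tangents u.1, f t := by
  exact Finset.sum_bij' (i := fun (t : (T').X) _ => t.1)
    (j := fun (t : T.X) ht => (⟨t, by
      have h2 := (PGraph.mem_tangents.1 ht).2
      rw [h2]; exact u_ne_v T v h₀ hv hh hrt honly u⟩ : (T').X))
    (hi := fun a ha => PGraph.mem_tangents.2
      ((del_mem_tangents T v h₀ hv hh hrt honly).1 ha))
    (hj := fun a ha => (del_mem_tangents T v h₀ hv hh hrt honly).2
      (PGraph.mem_tangents.1 ha))
    (left_neg := fun a ha => rfl)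
    (right_neg := fun a ha => rfl)
    (h := fun a ha => rfl)

lemma del_card_vertexSet : T.toPGraph.vertexSet.card = (T').vertexSet.card + 1 := by
  have hbij : (T').vertexSet.card = (T.toPGraph.vertexSet.erase v).card := by
    apply Finset.card_bij (i := fun (x : (T').X) _ => x.1)
    · intro a ha
      rw [PGraph.mem_vertexSet, del_isVertex T v h₀ hv hh hrt honly a] at ha
      exact Finset.mem_erase.2 ⟨u_ne_v T v h₀ hv hh hrt honly a, PGraph.mem_vertexSet.2 ha⟩
    · intro a ha b hb hab
      exact Subtype.ext hab
    · intro a ha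
      rcases Finset.mem_erase.1 ha with ⟨hne, hmem⟩
      have hmem' := PGraph.mem_vertexSet.1 hmem
      refine ⟨⟨a, rt_ne_v_of_vertex T v h₀ hv hh hrt honly hmem' hne⟩, ?_, rfl⟩
      rw [PGraph.mem_vertexSet, del_isVertex T v h₀ hv hh hrt honly]
      exact hmem'
  rw [hbij, Finset.card_erase_of_mem (PGraph.mem_vertexSet.2 hv)]
  have : 0 < T.toPGraph.vertexSet.card :=
    Finset.card_pos.2 ⟨v, PGraph.mem_vertexSet.2 hv⟩
  omega

lemma del_card_edgeHalfSet :
    T.toPGraph.edgeHalfSet.card = (T').edgeHalfSet.card + 2 := by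
  have hkE : T.toPGraph.IsEdgeHalf (T.inv h₀) := hh.inv
  have hkne : T.inv h₀ ≠ h₀ := by
    intro hc; exact hh.2 hc
  have hbij : (T').edgeHalfSet.card
      = ((T.toPGraph.edgeHalfSet.erase h₀).erase (T.inv h₀)).card := by
    apply Finset.card_bij (i := fun (x : (T').X) _ => x.1)
    · intro a ha
      rw [PGraph.mem_edgeHalfSet, del_isEdgeHalf T v h₀ hv hh hrt honly a] at ha
      refine Finset.mem_erase.2 ⟨ha.2, Finset.mem_erase.2 ⟨?_, PGraph.mem_edgeHalfSet.2 ha.1⟩⟩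
      intro hc
      exact a.2 (by rw [hc, hrt])
    · intro a ha b hb hab
      exact Subtype.ext hab
    · intro a ha
      rcases Finset.mem_erase.1 ha with ⟨hne1, ha2⟩
      rcases Finset.mem_erase.1 ha2 with ⟨hne2, hmem⟩
      have hE := PGraph.mem_edgeHalfSet.1 hmem
      have hav : T.rt a ≠ v := by
        intro hc; exact hne2 (honly a hE hc)
      refine ⟨⟨a, hav⟩, ?_, rfl⟩
      rw [PGraph.mem_edgeHalfSet, del_isEdgeHalf T v h₀ hv hh hrt honly]
      exact ⟨hE, hne1⟩
  have h1 : h₀ ∈ T.toPGraph.edgeHalfSet := PGraph.mem_edgeHalfSet.2 hh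
  have h2 : T.inv h₀ ∈ T.toPGraph.edgeHalfSet.erase h₀ :=
    Finset.mem_erase.2 ⟨hkne, PGraph.mem_edgeHalfSet.2 hkE⟩
  rw [hbij, Finset.card_erase_of_mem h2, Finset.card_erase_of_mem h1]
  have c1 : 0 < (T.toPGraph.edgeHalfSet.erase h₀).card := Finset.card_pos.2 ⟨_, h2⟩
  have c2 : 0 < T.toPGraph.edgeHalfSet.card := Finset.card_pos.2 ⟨_, h1⟩
  have c3 : (T.toPGraph.edgeHalfSet.erase h₀).card = T.toPGraph.edgeHalfSet.card - 1 :=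
    Finset.card_erase_of_mem h1
  omega

lemma del_sum_gw :
    ∑ u ∈ (T').vertexSet, T.gw u.1
      = ∑ u ∈ T.toPGraph.vertexSet.erase v, T.gw u := by
  apply Finset.sum_bij (i := fun (x : (T').X) _ => x.1)
  · intro a ha
    rw [PGraph.mem_vertexSet, del_isVertex T v h₀ hv hh hrt honly a] at ha
    exact Finset.mem_erase.2 ⟨u_ne_v T v h₀ hv hh hrt honly a, PGraph.mem_vertexSet.2 ha⟩
  · intro a ha b hb hab
    exact Subtype.ext hab
  · intro a ha
    rcases Finset.mem_erase.1 ha with ⟨hne, hmem⟩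
    have hmem' := PGraph.mem_vertexSet.1 hmem
    refine ⟨⟨a, rt_ne_v_of_vertex T v h₀ hv hh hrt honly hmem' hne⟩, ?_, rfl⟩
    rw [PGraph.mem_vertexSet, del_isVertex T v h₀ hv hh hrt honly]
    exact hmem'
  · intro a ha; rfl

lemma del_genus (hgen : T.genus = 0) (hgv : T.gw v = 0) :
    (Tdel T v h₀ hv hh hrt honly).genus = 0 := by
  have hV := del_card_vertexSet T v h₀ hv hh hrt honly
  have hE := del_card_edgeHalfSet T v h₀ hv hh hrt honly
  have h1 : ∑ u ∈ (T').vertexSet, (T.gw u.1 : ℤ)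
      = ∑ u ∈ T.toPGraph.vertexSet.erase v, (T.gw u : ℤ) := by
    have h0 := congrArg (fun n : ℕ => (n : ℤ)) (del_sum_gw T v h₀ hv hh hrt honly)
    push_cast at h0
    exact h0
  have h2 : ∑ u ∈ T.toPGraph.vertexSet.erase v, (T.gw u : ℤ)
      = ∑ u ∈ T.toPGraph.vertexSet, (T.gw u : ℤ) :=
    Finset.sum_erase _ (by rw [hgv]; rfl)
  unfold WGraph.genus PGraph.numEdges PGraph.numVertices at hgen ⊢
  show ((#(T').edgeHalfSet / 2 : ℕ) : ℤ) - (#(T').vertexSet : ℤ) + 1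
      + ∑ u ∈ (T').vertexSet, (T.gw u.1 : ℤ) = 0
  rw [h1, h2]
  omega

lemma del_connected (hconn : T.toPGraph.Connected) :
    (T').Connected := by
  have hkrt := k_rt T v h₀ hv hh hrt honly
  constructor
  · exact ⟨⟨T.inv h₀, hkrt⟩⟩
  · intro x y
    set f : T.X → (T').X := fun a =>
      if ha : T.rt a = v then ⟨T.inv h₀, hkrt⟩ else ⟨a, ha⟩ with hf
    have hstep : ∀ a c, (T.rt a = c ∨ T.inv a = c) →
        Relation.EqvGen (fun a b : (T').X => (T').rt a = b ∨ (T').inv a = b) (f a) (f c) := by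
      intro a c hac
      rcases hac with h | h
      · by_cases haD : T.rt a = v
        · have hcD : T.rt c = v := by rw [← h, T.rt_idem]; exact haD
          rw [hf]; simp only [dif_pos haD, dif_pos hcD]
          exact Relation.EqvGen.refl _
        · have hcD : ¬ T.rt c = v := by rw [← h, T.rt_idem]; exact haD
          rw [hf]; simp only [dif_neg haD, dif_neg hcD]
          apply Relation.EqvGen.rel
          left
          apply Subtype.ext
          rw [del_rt T v h₀ hv hh hrt honly]
          exact h
      · by_cases haD : T.rt a = v
        · -- a is v, h₀, or a leg at v
          by_cases hav : a = v
          · have : c = v := by rw [← h, hav, PGraph.inv_of_vertex hv]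
            rw [hf]; simp only [dif_pos haD, dif_pos (by rw [this]; exact hv : T.rt c = v)]
            exact Relation.EqvGen.refl _
          · have hhalf : T.toPGraph.IsHalf a := by
              intro hc; exact hav (by rw [← haD, hc])
            rcases PGraph.leg_or_edgeHalf hhalf with hl | he
            · have : c = a := by rw [← h, hl.2]
              rw [this]
              exact Relation.EqvGen.refl _
            · have ha0 : a = h₀ := honly a he haD
              have hck : c = T.inv h₀ := by rw [← h, ha0]
              have hcD : ¬ T.rt c = v := by rw [hck]; exact hkrt
              rw [hf]; simp only [dif_pos haD, dif_neg hcD]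
              have hceq : (⟨c, hcD⟩ : (T').X) = ⟨T.inv h₀, hkrt⟩ := Subtype.ext hck
              rw [hceq]
              exact Relation.EqvGen.refl _
        · by_cases hcD : T.rt c = v
          · -- c ∈ D and inv a = c with a ∉ D: c must be h₀, a = inv h₀
            by_cases hcv : c = v
            · exfalso
              have : a = v := by rw [← T.inv_invol a, h, hcv, PGraph.inv_of_vertex hv]
              rw [this] at haD; exact haD hv
            · have hhalf : T.toPGraph.IsHalf c := by
                intro hcc; exact hcv (by rw [← hcD, hcc])
              rcases PGraph.leg_or_edgeHalf hhalf with hl | he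
              · exfalso
                have : a = c := by rw [← T.inv_invol a, h, hl.2]
                rw [this] at haD; exact haD hcD
              · have hc0 : c = h₀ := honly c he hcD
                have hak : a = T.inv h₀ := by rw [← T.inv_invol a, h, hc0]
                rw [hf]; simp only [dif_neg haD, dif_pos hcD]
                have : (⟨a, haD⟩ : (T').X) = ⟨T.inv h₀, hkrt⟩ := Subtype.ext hak
                rw [this]
                exact Relation.EqvGen.refl _
          · rw [hf]; simp only [dif_neg haD, dif_neg hcD]
            apply Relation.EqvGen.rel
            right
            by_cases hak : a = T.inv h₀
            · exfalso
              have : c = h₀ := by rw [← h, hak, T.inv_invol]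
              rw [this] at hcD; exact hcD hrt
            · apply Subtype.ext
              rw [del_inv_ne T v h₀ hv hh hrt honly ⟨a, haD⟩ hak]
              exact h
    have hxy := hconn.2 x.1 y.1
    have hmain := eqvGen_map f hstep hxy
    have hx : f x.1 = x := by
      rw [hf]; simp only [dif_neg x.2]
    have hy : f y.1 = y := by
      rw [hf]; simp only [dif_neg y.2]
    rwa [hx, hy] at hmain
local notation "Lv" => cfilter T.toPGraph.IsLeg (T.toPGraph.tangents v)

noncomputable def bdel (b : T.X → ℤ) : (T').X → ℤ :=
  fun x => if x.1 = T.inv h₀ then ∑ p ∈ Lv, b p else b x.1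

lemma h0_notin_Lv : h₀ ∉ Lv := by
  intro hc
  exact (mem_cfilter.1 hc).2.not_edgeHalf hh

lemma Lv_subset : Lv ⊆ T.toPGraph.legSet := by
  intro x hx
  exact PGraph.mem_legSet.2 (mem_cfilter.1 hx).2

lemma mem_Lv {x : T.X} : x ∈ Lv ↔ (T.toPGraph.IsLeg x ∧ T.rt x = v) := by
  rw [mem_cfilter, PGraph.mem_tangents]
  exact ⟨fun h => ⟨h.2, h.1.2⟩, fun h => ⟨⟨h.1.1, h.2⟩, h.1⟩⟩

lemma tangents_v : T.toPGraph.tangents v = insert h₀ Lv := by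
  ext x
  rw [PGraph.mem_tangents, Finset.mem_insert, mem_Lv T v h₀ hv hh hrt honly]
  constructor
  · rintro ⟨hx, hr⟩
    rcases PGraph.leg_or_edgeHalf hx with hl | he
    · exact Or.inr ⟨hl, hr⟩
    · exact Or.inl (honly x he hr)
  · rintro (rfl | ⟨hl, hr⟩)
    · exact ⟨hh.1, hrt⟩
    · exact ⟨hl.1, hr⟩

lemma k_mem_legSet : (⟨T.inv h₀, k_rt T v h₀ hv hh hrt honly⟩ : (T').X) ∈ (T').legSet :=
  PGraph.mem_legSet.2 ((del_isLeg T v h₀ hv hh hrt honly _).2 (Or.inr rfl))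

lemma del_sum_legs (b : T.X → ℤ) :
    ∑ p ∈ (T').legSet, bdel T v h₀ hv hh hrt honly b p = ∑ p ∈ T.toPGraph.legSet, b p := by
  classical
  have hsplit := Finset.add_sum_erase (T').legSet (bdel T v h₀ hv hh hrt honly b)
    (k_mem_legSet T v h₀ hv hh hrt honly)
  rw [← hsplit]
  have hA : ∑ p ∈ (T').legSet.erase ⟨T.inv h₀, k_rt T v h₀ hv hh hrt honly⟩,
      bdel T v h₀ hv hh hrt honly b p
      = ∑ p ∈ T.toPGraph.legSet \ Lv, b p := by
    apply Finset.sum_bij (i := fun (x : (T').X) _ => x.1)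
    · intro a ha
      rcases Finset.mem_erase.1 ha with ⟨hne, hmem⟩
      have hleg := PGraph.mem_legSet.1 hmem
      rcases (del_isLeg T v h₀ hv hh hrt honly a).1 hleg with hl | hk
      · refine Finset.mem_sdiff.2 ⟨PGraph.mem_legSet.2 hl, ?_⟩
        intro hc
        exact a.2 ((mem_Lv T v h₀ hv hh hrt honly).1 hc).2
      · exact absurd (Subtype.ext hk) hne
    · intro a ha c hc hac
      exact Subtype.ext hac
    · intro p hp
      rcases Finset.mem_sdiff.1 hp with ⟨hmem, hnot⟩
      have hleg := PGraph.mem_legSet.1 hmem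
      have hrtp : T.rt p ≠ v := by
        intro hc
        exact hnot ((mem_Lv T v h₀ hv hh hrt honly).2 ⟨hleg, hc⟩)
      refine ⟨⟨p, hrtp⟩, ?_, rfl⟩
      refine Finset.mem_erase.2 ⟨?_, PGraph.mem_legSet.2
        ((del_isLeg T v h₀ hv hh hrt honly _).2 (Or.inl hleg))⟩
      intro hc
      exact ne_k_of_leg T v h₀ hv hh hrt honly hleg (by rw [Subtype.ext_iff] at hc; exact hc)
    · intro a ha
      rcases Finset.mem_erase.1 ha with ⟨hne, hmem⟩
      unfold bdel
      rw [if_neg]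
      intro hc
      exact hne (Subtype.ext hc)
  rw [hA]
  have hk : bdel T v h₀ hv hh hrt honly b ⟨T.inv h₀, k_rt T v h₀ hv hh hrt honly⟩
      = ∑ p ∈ Lv, b p := by
    unfold bdel
    rw [if_pos rfl]
  rw [hk, add_comm]
  exact Finset.sum_sdiff (Lv_subset T v h₀ hv hh hrt honly)
lemma leaf_step (b : T.X → ℤ)
    (hdel : ∃! σ' : SlopeAssignment (T'),
      σ'.Harmonic ∧ ∀ p, (T').IsLeg p → σ'.s p = bdel T v h₀ hv hh hrt honly b p) :
    ∃! σ : SlopeAssignment T.toPGraph,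
      σ.Harmonic ∧ ∀ p, T.toPGraph.IsLeg p → σ.s p = b p := by
  classical
  obtain ⟨σ', ⟨hharm', hleg'⟩, huniq'⟩ := hdel
  have hkrt := k_rt T v h₀ hv hh hrt honly
  have hkleg : ((T').IsLeg ⟨T.inv h₀, hkrt⟩) :=
    (del_isLeg T v h₀ hv hh hrt honly _).2 (Or.inr rfl)
  have hkval : σ'.s ⟨T.inv h₀, hkrt⟩ = ∑ p ∈ Lv, b p := by
    rw [hleg' _ hkleg]
    unfold bdel
    rw [if_pos rfl]
  have hvneh : v ≠ h₀ := fun hc => v_ne_half T v h₀ hv hh hrt honly hh.1 hc.symm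
  set S : T.X → ℤ := fun x =>
    if hx : T.rt x = v then (if x = h₀ then -(∑ p ∈ Lv, b p) else if x = v then 0 else b x)
    else σ'.s ⟨x, hx⟩ with hSdef
  have hSsub : ∀ x : (T').X, S x.1 = σ'.s x := by
    intro x
    rw [hSdef]
    simp only [dif_neg x.2]
  have hSh0 : S h₀ = -(∑ p ∈ Lv, b p) := by
    rw [hSdef]; simp [hrt]
  have hSv : S v = 0 := by
    rw [hSdef]
    have hvv : T.rt v = v := hv
    simp [hvv, hvneh]
  have hSk : S (T.inv h₀) = ∑ p ∈ Lv, b p := by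
    have := hSsub ⟨T.inv h₀, hkrt⟩
    rw [this, hkval]
  have hSLv : ∀ x ∈ Lv, S x = b x := by
    intro x hxm
    rcases (mem_Lv T v h₀ hv hh hrt honly).1 hxm with ⟨hleg, hrtx⟩
    have hx1 : x ≠ h₀ := fun hc => hleg.not_edgeHalf (hc ▸ hh)
    have hx2 : x ≠ v := v_ne_half T v h₀ hv hh hrt honly hleg.1
    rw [hSdef]
    simp [hrtx, hx1, hx2]
  have hτs : ∀ τ : SlopeAssignment T.toPGraph, τ.Harmonic →
      (∀ p, T.toPGraph.IsLeg p → τ.s p = b p) →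
      τ.s h₀ = -(∑ p ∈ Lv, b p) ∧ τ.s (T.inv h₀) = ∑ p ∈ Lv, b p := by
    intro τ hτh hτl
    have hsum := hτh v hv
    rw [tangents_v T v h₀ hv hh hrt honly,
      Finset.sum_insert (h0_notin_Lv T v h₀ hv hh hrt honly)] at hsum
    have : ∑ p ∈ Lv, τ.s p = ∑ p ∈ Lv, b p := by
      apply Finset.sum_congr rfl
      intro p hp
      exact hτl p ((mem_Lv T v h₀ hv hh hrt honly).1 hp).1
    rw [this] at hsum
    have h1 : τ.s h₀ = -(∑ p ∈ Lv, b p) := by linarith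
    refine ⟨h1, ?_⟩
    rw [τ.edge_antisym h₀ hh, h1]
    ring
  -- the slope assignment on T
  refine ⟨⟨S, ?_, ?_⟩, ⟨?_, ?_⟩, ?_⟩
  · -- vertex_zero
    intro x hx
    by_cases hxv : T.rt x = v
    · have : x = v := by rw [← hx]; exact hxv
      rw [this, hSv]
    · rw [hSsub ⟨x, hxv⟩]
      exact σ'.vertex_zero _ ((del_isVertex T v h₀ hv hh hrt honly _).2 hx)
  · -- edge_antisym
    intro x hx
    by_cases hxv : T.rt x = v
    · have hx0 : x = h₀ := honly x hx hxv
      subst hx0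
      rw [hSk, hSh0]
      ring
    · by_cases hix : T.rt (T.inv x) = v
      · have hixh : T.inv x = h₀ := honly _ hx.inv hix
        have hxk : x = T.inv h₀ := by rw [← T.inv_invol x, hixh]
        rw [hixh, hSh0, hxk, hSk]
      · have hxk : x ≠ T.inv h₀ := by
          intro hc
          apply hix
          rw [hc, T.inv_invol]
          exact hrt
        have hEH : (T').IsEdgeHalf ⟨x, hxv⟩ :=
          (del_isEdgeHalf T v h₀ hv hh hrt honly _).2 ⟨hx, hxk⟩
        have hinv : ((T').inv ⟨x, hxv⟩) = ⟨T.inv x, hix⟩ :=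
          Subtype.ext (del_inv_ne T v h₀ hv hh hrt honly ⟨x, hxv⟩ hxk)
        have := σ'.edge_antisym _ hEH
        rw [hinv] at this
        rw [hSsub ⟨T.inv x, hix⟩, hSsub ⟨x, hxv⟩]
        exact this
  · -- harmonic
    intro u hu
    show ∑ t ∈ T.toPGraph.tangents u, S t = 0
    by_cases huv : u = v
    · rw [huv, tangents_v T v h₀ hv hh hrt honly,
        Finset.sum_insert (h0_notin_Lv T v h₀ hv hh hrt honly), hSh0]
      have : ∑ p ∈ Lv, S p = ∑ p ∈ Lv, b p :=
        Finset.sum_congr rfl (fun p hp => hSLv p hp)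
      rw [this]
      ring
    · have hu' : T.rt u ≠ v := rt_ne_v_of_vertex T v h₀ hv hh hrt honly hu huv
      have hvert : (T').IsVertex ⟨u, hu'⟩ :=
        (del_isVertex T v h₀ hv hh hrt honly _).2 hu
      have htr := del_sum_tangents T v h₀ hv hh hrt honly ⟨u, hu'⟩ S
      rw [← htr]
      have : ∑ t ∈ (T').tangents ⟨u, hu'⟩, S t.1
          = ∑ t ∈ (T').tangents ⟨u, hu'⟩, σ'.s t :=
        Finset.sum_congr rfl (fun t _ => hSsub t)
      rw [this]
      exact hharm' _ hvert
  · -- leg values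
    intro p hp
    show S p = b p
    by_cases hpv : T.rt p = v
    · exact hSLv p ((mem_Lv T v h₀ hv hh hrt honly).2 ⟨hp, hpv⟩)
    · rw [hSsub ⟨p, hpv⟩]
      have hpleg : (T').IsLeg ⟨p, hpv⟩ :=
        (del_isLeg T v h₀ hv hh hrt honly _).2 (Or.inl hp)
      rw [hleg' _ hpleg]
      unfold bdel
      rw [if_neg (ne_k_of_leg T v h₀ hv hh hrt honly hp)]
  · -- uniqueness
    rintro τ ⟨hτh, hτl⟩
    obtain ⟨hτh0, hτk⟩ := hτs τ hτh hτl
    -- restrict τ to T'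
    set τ' : SlopeAssignment (T') :=
      { s := fun x => τ.s x.1
        vertex_zero := fun x hx =>
          τ.vertex_zero x.1 ((del_isVertex T v h₀ hv hh hrt honly x).1 hx)
        edge_antisym := by
          intro x hx
          rcases (del_isEdgeHalf T v h₀ hv hh hrt honly x).1 hx with ⟨hE, hk⟩
          show τ.s ((T').inv x).1 = - τ.s x.1
          rw [del_inv_ne T v h₀ hv hh hrt honly x hk]
          exact τ.edge_antisym x.1 hE } with hτ'def
    have hτ'harm : τ'.Harmonic := by
      intro u hu
      have := del_sum_tangents T v h₀ hv hh hrt honly u τ.s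
      show ∑ t ∈ (T').tangents u, τ.s t.1 = 0
      rw [this]
      exact hτh u.1 ((del_isVertex T v h₀ hv hh hrt honly u).1 hu)
    have hτ'leg : ∀ p, (T').IsLeg p → τ'.s p = bdel T v h₀ hv hh hrt honly b p := by
      intro p hp
      rcases (del_isLeg T v h₀ hv hh hrt honly p).1 hp with hl | hk
      · show τ.s p.1 = _
        unfold bdel
        rw [if_neg (ne_k_of_leg T v h₀ hv hh hrt honly hl), hτl p.1 hl]
      · show τ.s p.1 = _
        unfold bdel
        rw [if_pos hk, hk, hτk]
    have heq : τ' = σ' := huniq' τ' ⟨hτ'harm, hτ'leg⟩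
    apply SlopeAssignment.ext'
    funext x
    show τ.s x = S x
    by_cases hxv : T.rt x = v
    · by_cases hx0 : x = h₀
      · subst hx0; rw [hτh0, hSh0]
      · by_cases hxveq : x = v
        · rw [hxveq, hSv]
          exact τ.vertex_zero v hv
        · have hhalf : T.toPGraph.IsHalf x := fun hc => hxveq (by rw [← hxv, hc])
          rcases PGraph.leg_or_edgeHalf hhalf with hl | hE
          · rw [hτl x hl, hSLv x ((mem_Lv T v h₀ hv hh hrt honly).2 ⟨hl, hxv⟩)]
          · exact absurd (honly x hE hxv) hx0
    · rw [hSsub ⟨x, hxv⟩, ← heq]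
end Leaf

lemma key_induction : ∀ (n : ℕ) (T : WGraph), Fintype.card T.X ≤ n → IsTree T →
    ∀ b : T.X → ℤ, (∑ p ∈ T.toPGraph.legSet, b p = 0) →
    ∃! σ : SlopeAssignment T.toPGraph,
      σ.Harmonic ∧ ∀ p, T.toPGraph.IsLeg p → σ.s p = b p := by
  intro n
  induction n with
  | zero =>
    intro T hcard hT b hb
    exfalso
    have : 0 < Fintype.card T.X := Fintype.card_pos_iff.2 hT.1.1
    omega
  | succ n ih =>
    intro T hcard hT b hb
    classical
    obtain ⟨u, hu, hlow⟩ := exists_low_vertex T hT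
    by_cases hstar : cfilter T.toPGraph.IsEdgeHalf (T.toPGraph.tangents u) = ∅
    · -- star case: every half-edge is a leg at u
      have hQ := star_case T.toPGraph hT.1 u hu hstar
      have hrtu : T.rt u = u := hu
      have hnoE : ∀ x, T.toPGraph.IsEdgeHalf x → False := by
        intro x hx
        have hr : T.rt x = u := by
          rcases hQ x with rfl | hr
          · exact absurd hrtu hx.1
          · exact hr
        have hmem : x ∈ cfilter T.toPGraph.IsEdgeHalf (T.toPGraph.tangents u) :=
          mem_cfilter.2 ⟨PGraph.mem_tangents.2 ⟨hx.1, hr⟩, hx⟩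
        rw [hstar] at hmem
        exact absurd hmem (Finset.notMem_empty x)
      have htl : T.toPGraph.tangents u = T.toPGraph.legSet := by
        ext x
        rw [PGraph.mem_tangents, PGraph.mem_legSet]
        constructor
        · rintro ⟨hx, hr⟩
          rcases PGraph.leg_or_edgeHalf hx with hl | he
          · exact hl
          · exact absurd (hnoE x he) (fun h => h)
        · intro hl
          refine ⟨hl.1, ?_⟩
          rcases hQ x with rfl | hr
          · exact absurd hrtu hl.1
          · exact hr
      have hvert : ∀ w, T.toPGraph.IsVertex w → w = u := by
        intro w hw
        rcases hQ w with rfl | hr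
        · rfl
        · rw [← hw]; exact hr
      have hlegOfHalf : ∀ x, T.toPGraph.IsHalf x → T.toPGraph.IsLeg x := by
        intro x hx
        rcases PGraph.leg_or_edgeHalf hx with hl | he
        · exact hl
        · exact absurd (hnoE x he) (fun h => h)
      refine ⟨⟨fun x => if T.rt x = x then 0 else b x, ?_, ?_⟩, ⟨?_, ?_⟩, ?_⟩
      · intro x hx
        exact if_pos hx
      · intro x hx
        exact absurd (hnoE x hx) (fun h => h)
      · intro w hw
        show ∑ t ∈ T.toPGraph.tangents w, (if T.rt t = t then 0 else b t) = 0
        rw [hvert w hw, htl]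
        rw [Finset.sum_congr rfl
          (fun p hp => if_neg (PGraph.mem_legSet.1 hp).1 : ∀ p ∈ T.toPGraph.legSet, _ = b p)]
        exact hb
      · intro p hp
        show (if T.rt p = p then 0 else b p) = b p
        exact if_neg hp.1
      · rintro τ ⟨hτh, hτl⟩
        apply SlopeAssignment.ext'
        funext x
        show τ.s x = (if T.rt x = x then 0 else b x)
        by_cases hx : T.rt x = x
        · rw [if_pos hx]
          exact τ.vertex_zero x hx
        · rw [if_neg hx]
          exact hτl x (hlegOfHalf x hx)
    · -- leaf case
      have hval : edgevalence T.toPGraph u = 1 := by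
        have hpos : 0 < (cfilter T.toPGraph.IsEdgeHalf (T.toPGraph.tangents u)).card :=
          Finset.card_pos.2 (Finset.nonempty_iff_ne_empty.2 hstar)
        unfold edgevalence at hlow ⊢
        omega
      have hgu : T.gw u = 0 := by
        unfold edgevalence at hval
        omega
      obtain ⟨h₀, hh0⟩ := Finset.card_eq_one.1 hval
      have hmem : h₀ ∈ cfilter T.toPGraph.IsEdgeHalf (T.toPGraph.tangents u) := by
        rw [hh0]; exact Finset.mem_singleton_self h₀
      rcases mem_cfilter.1 hmem with ⟨ht, hE⟩
      have hrt0 : T.rt h₀ = u := (PGraph.mem_tangents.1 ht).2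
      have honly : ∀ x, T.toPGraph.IsEdgeHalf x → T.rt x = u → x = h₀ := by
        intro x hx hr
        have hm : x ∈ cfilter T.toPGraph.IsEdgeHalf (T.toPGraph.tangents u) :=
          mem_cfilter.2 ⟨PGraph.mem_tangents.2 ⟨hx.1, hr⟩, hx⟩
        rw [hh0] at hm
        exact Finset.mem_singleton.1 hm
      have hcard' : Fintype.card (Tdel T u h₀ hu hE hrt0 honly).X ≤ n := by
        have hlt : Fintype.card {x : T.X // T.rt x ≠ u} < Fintype.card T.X :=
          Fintype.card_subtype_lt (x := u) (by simp [show T.rt u = u from hu])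
        have hrfl : Fintype.card (Tdel T u h₀ hu hE hrt0 honly).X
            = Fintype.card {x : T.X // T.rt x ≠ u} := rfl
        omega
      have htree' : IsTree (Tdel T u h₀ hu hE hrt0 honly) :=
        ⟨del_connected T u h₀ hu hE hrt0 honly hT.1,
         del_genus T u h₀ hu hE hrt0 honly hT.2 hgu⟩
      have hb' : ∑ p ∈ (PDel T u h₀ hu hE hrt0 honly).legSet,
          bdel T u h₀ hu hE hrt0 honly b p = 0 := by
        rw [del_sum_legs T u h₀ hu hE hrt0 honly b]
        exact hb
      exact leaf_step T u h₀ hu hE hrt0 honly b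
        (ih (Tdel T u h₀ hu hE hrt0 honly) hcard' htree'
          (bdel T u h₀ hu hE hrt0 honly b) hb')

/-- Let `T` be a tree and `b` a function on its legs with
`Σ_{p ∈ L(T)} b(p) = 0`.  Then there is a unique harmonic slope assignment `s` on `T`
with `s(p) = b(p)` for every leg `p`. -/
theorem unique_harmonic_slopes_on_tree
    (T : WGraph) (hT : IsTree T) (b : T.X → ℤ)
    (hb : ∑ p ∈ T.toPGraph.legSet, b p = 0) :
    ∃! σ : SlopeAssignment T.toPGraph,
      σ.Harmonic ∧ ∀ p, T.toPGraph.IsLeg p → σ.s p = b p :=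
  key_induction (Fintype.card T.X) T le_rfl hT b hb

end TropDR
end

section
/- Let φ : G′ → G be a harmonic morphism of graphs and let s : H(G) → ℤ be a slope assignment on G. Define the pullback φ*s : H(G′) → ℤ by (φ*s)(h′) = d_φ(h′)·s(φ(h′)) if φ(h′) ∈ H(G), and (φ*s)(h′) = 0 if φ(h′) ∈ V(G). Then φ*s is a slope assignment on G′, and for every vertex v′ ∈ V(G′) one has Σ_{h′∈T_{v′}G′} (φ*s)(h′) = d_φ(v′) · Σ_{h∈T_{φ(v′)}G} s(h). In particular, if s is harmonic then φ*s is harmonic. -/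
namespace TropDR

open Finset

private lemma cfilter_eq {α : Type*} (p : α → Prop) [DecidablePred p] (s : Finset α) :
    cfilter p s = s.filter p := by
  unfold cfilter; congr

/-- Let `φ : G' → G` be a harmonic morphism of graphs and `s` a slope
assignment on `G`.  The pullback `φ*s`, given by `(φ*s)(h') = d_φ(h')·s(φ(h'))` on
half-edges mapping to half-edges and `0` on half-edges mapping to vertices (this is the
uniform formula below, since `d_φ` vanishes exactly on the contracted half-edges and `s`
vanishes on vertices), is a slope assignment on `G'`, and for every vertex `v'` of `G'`
one has `Σ_{h' ∈ T_{v'}G'} (φ*s)(h') = d_φ(v') · Σ_{h ∈ T_{φ(v')}G} s(h)`.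
In particular, if `s` is harmonic then `φ*s` is harmonic. -/
theorem pullback_of_slope_assignment
    (G' G : PGraph) (φ : HarmonicHom G' G) (σ : SlopeAssignment G) :
    ∃ σ' : SlopeAssignment G',
      (∀ x, σ'.s x = (φ.deg x : ℤ) * σ.s (φ.toFun x)) ∧
      (∀ v', G'.IsVertex v' →
        ∑ h' ∈ G'.tangents v', σ'.s h' =
          (φ.deg v' : ℤ) * ∑ h ∈ G.tangents (φ.toFun v'), σ.s h) ∧
      (σ.Harmonic → σ'.Harmonic) := by
  classical
  have vfix : ∀ y : G.X, G.IsVertex y → G.inv y = y := by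
    intro y hy
    rw [← hy]
    exact G.inv_fix_rt y
  have hvmap : ∀ x, G'.IsVertex x → G.IsVertex (φ.toFun x) := by
    intro x hx
    unfold PGraph.IsVertex at *
    rw [← φ.map_rt, hx]
  have hsum : ∀ v', G'.IsVertex v' →
      (∑ h' ∈ G'.tangents v', (φ.deg h' : ℤ) * σ.s (φ.toFun h')) =
        (φ.deg v' : ℤ) * ∑ h ∈ G.tangents (φ.toFun v'), σ.s h := by
    intro v' hv'
    rw [Finset.mul_sum]
    have key : ∀ h ∈ G.tangents (φ.toFun v'), (φ.deg v' : ℤ) * σ.s h =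
        ∑ h' ∈ (G'.tangents v').filter (fun h' => φ.toFun h' = h),
          (φ.deg h' : ℤ) * σ.s (φ.toFun h') := by
      intro h hh
      have hmem : G.IsHalf h ∧ G.rt h = φ.toFun v' := by
        simpa [PGraph.tangents, cfilter_eq] using hh
      rw [φ.harmonic v' hv' h hmem.1 hmem.2]
      simp only [cfilter_eq]
      push_cast
      rw [Finset.sum_mul]
      refine Finset.sum_congr rfl fun h' hh' => ?_
      rw [(Finset.mem_filter.mp hh').2]
    rw [Finset.sum_congr rfl key,
      Finset.sum_fiberwise_eq_sum_filter (G'.tangents v') (G.tangents (φ.toFun v'))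
        φ.toFun (fun h' => (φ.deg h' : ℤ) * σ.s (φ.toFun h'))]
    refine (Finset.sum_filter_of_ne ?_).symm
    intro h' hh' hne
    have hmem' : G'.IsHalf h' ∧ G'.rt h' = v' := by
      simpa [PGraph.tangents, cfilter_eq] using hh'
    have hrt : G.rt (φ.toFun h') = φ.toFun v' := by
      rw [← φ.map_rt, hmem'.2]
    have hhalf : G.IsHalf (φ.toFun h') := by
      intro hvx
      exact hne (by rw [σ.vertex_zero _ hvx, mul_zero])
    simpa [PGraph.tangents, cfilter_eq] using And.intro hhalf hrt
  refine ⟨⟨fun x => (φ.deg x : ℤ) * σ.s (φ.toFun x), ?_, ?_⟩, fun x => rfl, hsum, ?_⟩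
  · intro x hx
    simp [σ.vertex_zero _ (hvmap x hx)]
  · intro h hh
    show (φ.deg (G'.inv h) : ℤ) * σ.s (φ.toFun (G'.inv h)) = -((φ.deg h : ℤ) * σ.s (φ.toFun h))
    rw [φ.map_inv, φ.deg_edge h hh]
    by_cases hv : G.IsVertex (φ.toFun h)
    · rw [vfix _ hv, σ.vertex_zero _ hv]; ring
    · have hhalf : G.IsHalf (φ.toFun h) := hv
      have hedge : G.IsEdgeHalf (φ.toFun h) := by
        refine ⟨hhalf, fun hfix => ?_⟩
        exact φ.edge_not_leg h hh ⟨hhalf, hfix⟩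
      rw [σ.edge_antisym _ hedge]; ring
  · intro hs v' hv'
    show (∑ h' ∈ G'.tangents v', (φ.deg h' : ℤ) * σ.s (φ.toFun h')) = 0
    rw [hsum v' hv', hs _ (hvmap v' hv'), mul_zero]


end TropDR
end
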